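/- arXiv:1809.09386 — 5 statements merged into one kernel-verified Lean document; each statement's English description precedes it below -/
import Mathlib

section
/- Let G be a group, α : G → G^fab the free abelianisation map with kernel K, φ : G → ℝ a character factoring through α, and s_α : G^fab → G a set-theoretic section with s_α(1) = 1. Then the ring isomorphism s_α : (ℚK)G^fab → ℚG extends to a ring isomorphism between the Novikov ring Nov((ℚK)G^fab, φ) of the twisted group ring and the Novikov ring Nov(ℚG, φ); explicitly, the map ι sending x : G^fab → ℚK to the function g ↦ x(α(g))(g·s_α(α(g))⁻¹) is a ring isomorphism between the two Novikov rings. -/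
noncomputable section

open scoped Classical

/-- The evaluation homomorphism `G → (Hom(G, ℚ) → ℚ)`; its kernel is the kernel of the
free abelianisation map `α : G → G^fab` (the image of `G` in `H₁(G; ℚ)`). -/
def evalHom (G : Type*) [Group G] :
    G →* ((G →* Multiplicative ℚ) → Multiplicative ℚ) where
  toFun g f := f g
  map_one' := by funext f; simp
  map_mul' a b := by funext f; simp

/-- The kernel `K` of the free abelianisation map. -/
def fabK (G : Type*) [Group G] : Subgroup G := (evalHom G).ker

instance (G : Type*) [Group G] : (fabK G).Normal := MonoidHom.normal_ker _

/-- The free abelianisation `G^fab` of `G`. -/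
abbrev Fab (G : Type*) [Group G] := G ⧸ fabK G

/-- The free abelianisation map `α : G → G^fab`. -/
def fabMap (G : Type*) [Group G] : G →* Fab G := QuotientGroup.mk' (fabK G)

variable {G : Type*} [Group G]

lemma mem_fabK_of_eq_one {g : G} (h : fabMap G g = 1) : g ∈ fabK G := by
  have := MonoidHom.mem_ker.mpr h
  rwa [fabMap, QuotientGroup.ker_mk'] at this

lemma fabMap_eq_one_of_mem {g : G} (h : g ∈ fabK G) : fabMap G g = 1 := by
  exact MonoidHom.mem_ker.mp (by rwa [fabMap, QuotientGroup.ker_mk'])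

/-- Conjugation by `s a` as a map on `K = ker α`. -/
def conjFab (s : Fab G → G) (hs : ∀ a, fabMap G (s a) = a) (a : Fab G)
    (k : ↥(fabK G)) : ↥(fabK G) :=
  ⟨s a * k * (s a)⁻¹, by
    apply mem_fabK_of_eq_one
    have hk : fabMap G (k : G) = 1 := fabMap_eq_one_of_mem k.2
    simp [map_mul, map_inv, hk]⟩

/-- The structure function `ν a` on the coefficient ring `ℚ K`. -/
def nuFab (s : Fab G → G) (hs : ∀ a, fabMap G (s a) = a) (a : Fab G)
    (z : MonoidAlgebra ℚ ↥(fabK G)) : MonoidAlgebra ℚ ↥(fabK G) :=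
  MonoidAlgebra.ofCoeff (Finsupp.mapDomain (conjFab s hs a) z.coeff)

/-- The structure function (`2`-cocycle) `μ (a, b) = s a * s b * (s (a b))⁻¹ ∈ K ⊆ ℚ K`. -/
def muFab (s : Fab G → G) (hs : ∀ a, fabMap G (s a) = a) (a b : Fab G) :
    MonoidAlgebra ℚ ↥(fabK G) :=
  MonoidAlgebra.single
    ⟨s a * s b * (s (a * b))⁻¹, by
      apply mem_fabK_of_eq_one
      simp [map_mul, map_inv, hs, ← mul_assoc]⟩ 1

/-- The twisted convolution on functions `G^fab → ℚ K`, i.e. the multiplication of the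
Novikov ring `Nov((ℚ K) G^fab, φ)`. -/
def mulFab (s : Fab G → G) (hs : ∀ a, fabMap G (s a) = a)
    (x y : Fab G → MonoidAlgebra ℚ ↥(fabK G)) :
    Fab G → MonoidAlgebra ℚ ↥(fabK G) :=
  fun c => ∑ᶠ a : Fab G, x a * nuFab s hs a (y (a⁻¹ * c)) * muFab s hs a (a⁻¹ * c)

/-- The untwisted convolution on functions `G → ℚ`, i.e. the multiplication of the Novikov
ring `Nov(ℚ G, φ)`. -/
def mulG (x y : G → ℚ) : G → ℚ :=
  fun g => ∑ᶠ a : G, x a * y (a⁻¹ * g)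

/-- The Novikov condition over `G^fab`. -/
def NovFabMem (φA : Fab G → ℝ) (x : Fab G → MonoidAlgebra ℚ ↥(fabK G)) : Prop :=
  ∀ κ : ℝ, {a : Fab G | x a ≠ 0 ∧ φA a ≤ κ}.Finite

/-- The Novikov condition over `G`. -/
def NovGMem (φ : G → ℝ) (x : G → ℚ) : Prop :=
  ∀ κ : ℝ, {g : G | x g ≠ 0 ∧ φ g ≤ κ}.Finite

/-- The map `ι` sending `x : G^fab → ℚ K` to `g ↦ x (α g) (g · (s (α g))⁻¹)`. -/
def iotaFab (s : Fab G → G) (hs : ∀ a, fabMap G (s a) = a)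
    (x : Fab G → MonoidAlgebra ℚ ↥(fabK G)) : G → ℚ :=
  fun g => (x (fabMap G g)).coeff
    ⟨g * (s (fabMap G g))⁻¹, by
      apply mem_fabK_of_eq_one
      simp [map_mul, map_inv, hs]⟩

/-- The unit of `Nov((ℚ K) G^fab, φ)`. -/
def oneFab (G : Type*) [Group G] : Fab G → MonoidAlgebra ℚ ↥(fabK G) :=
  fun a => if a = 1 then MonoidAlgebra.single 1 1 else 0

/-- The unit of `Nov(ℚ G, φ)`. -/
def oneG (G : Type*) [Group G] : G → ℚ :=
  fun g => if g = 1 then 1 else 0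

/-! ### Auxiliary lemmas -/

lemma finsum_finsupp_apply {α β M : Type*} [AddCommMonoid M] (F : α → (β →₀ M))
    (h : (Function.support F).Finite) (b : β) :
    (∑ᶠ a, F a) b = ∑ᶠ a, F a b := by
  classical
  rw [finsum_eq_sum F h, Finsupp.finset_sum_apply]
  refine (finsum_eq_sum_of_support_subset _ ?_).symm
  intro a ha
  simp only [Function.mem_support] at ha
  simp only [Finset.coe_sort_coe, Set.Finite.coe_toFinset, Function.mem_support,
    Set.Finite.mem_toFinset, Finset.mem_coe]
  intro h0
  exact ha (by rw [h0]; rfl)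

lemma finsum_coeff_apply {α β R : Type*} [Semiring R] (F : α → MonoidAlgebra R β)
    (h : (Function.support F).Finite) (b : β) :
    (∑ᶠ a, F a).coeff b = ∑ᶠ a, (F a).coeff b := by
  classical
  rw [finsum_eq_sum F h, MonoidAlgebra.coeff_sum, Finsupp.finset_sum_apply]
  refine (finsum_eq_sum_of_support_subset _ ?_).symm
  intro a ha
  simp only [Function.mem_support] at ha
  simp only [Finset.coe_sort_coe, Set.Finite.coe_toFinset, Function.mem_support,
    Set.Finite.mem_toFinset, Finset.mem_coe]
  intro h0
  exact ha (by rw [h0]; rfl)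

lemma finsum_prod_eq {α β M : Type*} [AddCommMonoid M] (F : α → β → M)
    (h : (Function.support fun p : α × β => F p.1 p.2).Finite) :
    ∑ᶠ p : α × β, F p.1 p.2 = ∑ᶠ a, ∑ᶠ b, F a b := by
  classical
  set S := h.toFinset with hS
  have hmem : ∀ {p : α × β}, F p.1 p.2 ≠ 0 → p ∈ S := fun hp => h.mem_toFinset.mpr hp
  have h1 : ∀ a, ∑ᶠ b, F a b = ∑ b ∈ S.image Prod.snd, F a b := by
    intro a
    refine finsum_eq_sum_of_support_subset _ ?_
    intro b hb
    exact Finset.mem_coe.mpr (Finset.mem_image.mpr ⟨(a, b), hmem hb, rfl⟩)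
  have hsub : (Function.support fun p : α × β => F p.1 p.2) ⊆
      ↑(S.image Prod.fst ×ˢ S.image Prod.snd) := by
    intro p hp
    have := hmem hp
    simp only [Finset.coe_product, Set.mem_prod, Finset.coe_image, Set.mem_image,
      Finset.mem_coe]
    exact ⟨⟨p, this, rfl⟩, ⟨p, this, rfl⟩⟩
  calc ∑ᶠ p : α × β, F p.1 p.2
      = ∑ p ∈ S.image Prod.fst ×ˢ S.image Prod.snd, F p.1 p.2 :=
        finsum_eq_sum_of_support_subset _ hsub
    _ = ∑ a ∈ S.image Prod.fst, ∑ b ∈ S.image Prod.snd, F a b := Finset.sum_product _ _ _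
    _ = ∑ᶠ a, ∑ᶠ b, F a b := by
        rw [show (∑ᶠ a, ∑ᶠ b, F a b) = ∑ a ∈ S.image Prod.fst, ∑ᶠ b, F a b from
          finsum_eq_sum_of_support_subset _ ?_]
        · exact Finset.sum_congr rfl fun a _ => (h1 a).symm
        · intro a ha
          simp only [Function.mem_support] at ha
          by_contra hnmem
          apply ha
          have hz : ∀ b, F a b = 0 := by
            intro b
            by_contra hb
            exact hnmem (Finset.mem_coe.mpr (Finset.mem_image.mpr ⟨(a, b), hmem hb, rfl⟩))
          simp [hz]

lemma fabMap_coe (u : ↥(fabK G)) : fabMap G (u : G) = 1 := fabMap_eq_one_of_mem u.2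

lemma fabMap_mul_section (s : Fab G → G) (hs : ∀ a, fabMap G (s a) = a) (a : Fab G)
    (u : ↥(fabK G)) : fabMap G ((u : G) * s a) = a := by
  simp [map_mul, fabMap_coe, hs]

lemma iota_eq (s : Fab G → G) (hs : ∀ a, fabMap G (s a) = a)
    (x : Fab G → MonoidAlgebra ℚ ↥(fabK G)) {g : G} {a : Fab G} (h : fabMap G g = a) :
    iotaFab s hs x g = (x a).coeff ⟨g * (s a)⁻¹, by
      apply mem_fabK_of_eq_one
      simp [map_mul, map_inv, hs, h]⟩ := by
  subst h; rfl

lemma iota_apply (s : Fab G → G) (hs : ∀ a, fabMap G (s a) = a)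
    (x : Fab G → MonoidAlgebra ℚ ↥(fabK G)) (a : Fab G) (u : ↥(fabK G)) :
    iotaFab s hs x ((u : G) * s a) = (x a).coeff u := by
  rw [iota_eq s hs x (fabMap_mul_section s hs a u)]
  exact congrArg (fun v : ↥(fabK G) => (x a).coeff v) (Subtype.ext (by simp))

/-- The bijection `G^fab × K ≃ G`, `(a, u) ↦ u * s a`. -/
def fabEquiv (s : Fab G → G) (hs : ∀ a, fabMap G (s a) = a) :
    (Fab G × ↥(fabK G)) ≃ G where
  toFun p := (p.2 : G) * s p.1
  invFun g := (fabMap G g, ⟨g * (s (fabMap G g))⁻¹, by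
    apply mem_fabK_of_eq_one
    simp [map_mul, map_inv, hs]⟩)
  left_inv p := by
    obtain ⟨a, u⟩ := p
    dsimp only
    have h := fabMap_mul_section s hs a u
    refine Prod.ext h (Subtype.ext ?_)
    dsimp only
    rw [h]
    simp
  right_inv g := by simp

lemma conjFab_injective (s : Fab G → G) (hs : ∀ a, fabMap G (s a) = a) (a : Fab G) :
    Function.Injective (conjFab s hs a) := by
  intro k1 k2 h
  have h' := congrArg Subtype.val h
  simp only [conjFab] at h'
  exact Subtype.ext (mul_left_cancel (mul_right_cancel h'))

/-- The summand in the product formula. -/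
def Fterm (s : Fab G → G) (hs : ∀ a, fabMap G (s a) = a)
    (x y : Fab G → MonoidAlgebra ℚ ↥(fabK G)) (g : G) (a : Fab G) (u : ↥(fabK G)) : ℚ :=
  (x a).coeff u * (y (a⁻¹ * fabMap G g)).coeff
    ⟨(s a)⁻¹ * (u : G)⁻¹ * g * (s (a⁻¹ * fabMap G g))⁻¹, by
      apply mem_fabK_of_eq_one
      simp only [map_mul, map_inv, hs, fabMap_coe, inv_one, mul_one, one_mul]
      group⟩

lemma term_eval (s : Fab G → G) (hs : ∀ a, fabMap G (s a) = a)
    (x y : Fab G → MonoidAlgebra ℚ ↥(fabK G)) (g : G) (a : Fab G) :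
    (x a * nuFab s hs a (y (a⁻¹ * fabMap G g)) * muFab s hs a (a⁻¹ * fabMap G g)).coeff
      ⟨g * (s (fabMap G g))⁻¹, by
        apply mem_fabK_of_eq_one
        simp [map_mul, map_inv, hs]⟩ = ∑ᶠ u, Fterm s hs x y g a u := by
  classical
  rw [muFab, MonoidAlgebra.coeff_mul_single_apply, mul_one, MonoidAlgebra.coeff_mul_apply_left]
  have hpoint : ∀ u : ↥(fabK G),
      u⁻¹ * (⟨g * (s (fabMap G g))⁻¹, by
          apply mem_fabK_of_eq_one
          simp [map_mul, map_inv, hs]⟩ *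
        (⟨s a * s (a⁻¹ * fabMap G g) * (s (a * (a⁻¹ * fabMap G g)))⁻¹, by
          apply mem_fabK_of_eq_one
          simp [map_mul, map_inv, hs, ← mul_assoc]⟩ : ↥(fabK G))⁻¹) =
      conjFab s hs a ⟨(s a)⁻¹ * (u : G)⁻¹ * g * (s (a⁻¹ * fabMap G g))⁻¹, by
        apply mem_fabK_of_eq_one
        simp only [map_mul, map_inv, hs, fabMap_coe, inv_one, mul_one, one_mul]
        group⟩ := by
    intro u
    apply Subtype.ext
    simp only [conjFab, Subgroup.coe_mul, InvMemClass.coe_inv, mul_inv_cancel_left]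
    group
  rw [show (∑ᶠ u, Fterm s hs x y g a u) = ∑ u ∈ (x a).coeff.support, Fterm s hs x y g a u from
    finsum_eq_sum_of_support_subset _ ?_]
  · rw [Finsupp.sum]
    refine Finset.sum_congr rfl fun u _ => ?_
    rw [hpoint u, nuFab, MonoidAlgebra.coeff_ofCoeff, Finsupp.mapDomain_apply (conjFab_injective s hs a)]
    rfl
  · intro u hu
    simp only [Function.mem_support, Fterm] at hu
    simp only [Finset.mem_coe, Finsupp.mem_support_iff]
    intro h0
    exact hu (by rw [h0, zero_mul])

/-- Let `G` be a group, `α : G → G^fab` the free abelianisation map with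
kernel `K`, `φ : G → ℝ` a character factoring through `α` (via `φA`), and
`s : G^fab → G` a set-theoretic section with `s 1 = 1`.  Then the ring isomorphism
`s : (ℚ K) G^fab → ℚ G` extends to a ring isomorphism between the Novikov rings
`Nov((ℚ K) G^fab, φ)` and `Nov(ℚ G, φ)`; explicitly, the map `ι` sending
`x : G^fab → ℚ K` to `g ↦ x (α g) (g · s (α g)⁻¹)` restricts to an additive,
multiplicative, unit-preserving bijection between the two Novikov rings. -/
theorem stmt_5 (s : Fab G → G) (hs : ∀ a, fabMap G (s a) = a) (hs1 : s 1 = 1)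
    (φ : G → ℝ) (hφ : ∀ a b : G, φ (a * b) = φ a + φ b)
    (φA : Fab G → ℝ) (hfact : ∀ g : G, φA (fabMap G g) = φ g) :
    (∀ x : Fab G → MonoidAlgebra ℚ ↥(fabK G), NovFabMem φA x →
      NovGMem φ (iotaFab s hs x)) ∧
    (Set.InjOn (iotaFab s hs) {x | NovFabMem φA x}) ∧
    (∀ y : G → ℚ, NovGMem φ y →
      ∃ x : Fab G → MonoidAlgebra ℚ ↥(fabK G), NovFabMem φA x ∧ iotaFab s hs x = y) ∧
    (∀ x y : Fab G → MonoidAlgebra ℚ ↥(fabK G),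
      iotaFab s hs (x + y) = iotaFab s hs x + iotaFab s hs y) ∧
    (∀ x y : Fab G → MonoidAlgebra ℚ ↥(fabK G), NovFabMem φA x → NovFabMem φA y →
      iotaFab s hs (mulFab s hs x y) = mulG (iotaFab s hs x) (iotaFab s hs y)) ∧
    (iotaFab s hs (oneFab G) = oneG G) := by
  have hsurj : Function.Surjective (fabMap G) := QuotientGroup.mk'_surjective _
  have hφ1 : φ (1 : G) = 0 := by have := hφ 1 1; simp at this; linarith
  have hφA1 : φA (1 : Fab G) = 0 := by
    have := hfact 1
    rw [map_one] at this
    rw [this, hφ1]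
  have hφAmul : ∀ a b : Fab G, φA (a * b) = φA a + φA b := by
    intro a b
    obtain ⟨g1, rfl⟩ := hsurj a
    obtain ⟨g2, rfl⟩ := hsurj b
    rw [← map_mul, hfact, hfact, hfact, hφ]
  have hφAinv : ∀ a : Fab G, φA a⁻¹ = -φA a := by
    intro a
    have := hφAmul a a⁻¹
    simp [hφA1] at this
    linarith
  have hφcoe : ∀ u : ↥(fabK G), φ (u : G) = 0 := by
    intro u; rw [← hfact, fabMap_coe, hφA1]
  have hφsec : ∀ a, φ (s a) = φA a := fun a => by rw [← hfact, hs]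
  have part1 : ∀ x : Fab G → MonoidAlgebra ℚ ↥(fabK G), NovFabMem φA x →
      NovGMem φ (iotaFab s hs x) := by
    intro x hx κ
    have hfin : ({p : Fab G × ↥(fabK G) |
        x p.1 ≠ 0 ∧ φA p.1 ≤ κ ∧ p.2 ∈ (x p.1).coeff.support}).Finite := by
      apply Set.Finite.subset (Set.Finite.biUnion (hx κ)
        (fun a _ => ((x a).coeff.support.finite_toSet.image (fun u => ((a : Fab G), u)))))
      rintro ⟨a, u⟩ ⟨h1, h2, h3⟩
      exact Set.mem_biUnion ⟨h1, h2⟩ ⟨u, h3, rfl⟩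
    apply Set.Finite.subset (hfin.image (fun p => (p.2 : G) * s p.1))
    rintro g ⟨hg1, hg2⟩
    refine ⟨(fabMap G g, ⟨g * (s (fabMap G g))⁻¹, ?_⟩), ⟨?_, ?_, ?_⟩, ?_⟩
    · apply mem_fabK_of_eq_one; simp [map_mul, map_inv, hs]
    · intro h0; apply hg1; simp [iotaFab, h0]
    · rw [hfact]; exact hg2
    · exact Finsupp.mem_support_iff.mpr hg1
    · simp
  refine ⟨part1, ?_, ?_, ?_, ?_, ?_⟩
  · -- injectivity
    intro x _ y _ hxy
    funext a
    ext u
    have := congrFun hxy ((u : G) * s a)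
    rwa [iota_apply, iota_apply] at this
  · -- surjectivity
    intro z hz
    have hKfin : ∀ a : Fab G, {u : ↥(fabK G) | z ((u : G) * s a) ≠ 0}.Finite := by
      intro a
      have hinj : Function.Injective (fun u : ↥(fabK G) => (u : G) * s a) := by
        intro u v huv
        exact Subtype.ext (mul_right_cancel huv)
      apply Set.Finite.subset ((hz (φA a)).preimage hinj.injOn)
      intro u hu
      refine ⟨hu, ?_⟩
      rw [hφ, hφcoe, hφsec]
      linarith
    refine ⟨fun a => ⟨(hKfin a).toFinset, fun u => z ((u : G) * s a), ?_⟩, ?_, ?_⟩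
    · intro u; simp [Set.Finite.mem_toFinset]
    · intro κ
      apply Set.Finite.subset ((hz κ).image (fabMap G))
      rintro a ⟨ha1, ha2⟩
      obtain ⟨u, hu⟩ := Finsupp.ne_iff.mp (mt MonoidAlgebra.coeff_eq_zero.mp ha1)
      simp only [MonoidAlgebra.coeff_ofCoeff, MonoidAlgebra.coeff_zero, Finsupp.coe_mk, Finsupp.coe_zero, Pi.zero_apply] at hu
      refine ⟨(u : G) * s a, ⟨hu, ?_⟩, fabMap_mul_section s hs a u⟩
      rw [hφ, hφcoe, hφsec]
      linarith
    · funext g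
      rw [iota_eq s hs _ rfl]
      simp [MonoidAlgebra.coeff_ofCoeff]
  · -- additivity
    intro x y
    funext g
    simp only [iotaFab, Pi.add_apply]
    exact Finsupp.add_apply _ _ _
  · -- multiplicativity
    intro x y hx hy
    funext g
    have hT : {a : Fab G | x a ≠ 0 ∧ y (a⁻¹ * fabMap G g) ≠ 0}.Finite := by
      apply Set.Finite.subset ((hx 0).union
        ((hy (φA (fabMap G g))).image (fun b => fabMap G g * b⁻¹)))
      rintro a ⟨ha1, ha2⟩
      rcases le_or_gt (φA a) 0 with h | h
      · exact Or.inl ⟨ha1, h⟩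
      · refine Or.inr ⟨a⁻¹ * fabMap G g, ⟨ha2, ?_⟩, ?_⟩
        · rw [hφAmul, hφAinv]; linarith
        · group
    have hP : (Function.support fun p : Fab G × ↥(fabK G) =>
        Fterm s hs x y g p.1 p.2).Finite := by
      apply Set.Finite.subset (Set.Finite.biUnion hT
        (fun a _ => ((x a).coeff.support.finite_toSet.image (fun u => ((a : Fab G), u)))))
      rintro ⟨a, u⟩ hp
      simp only [Function.mem_support, Fterm] at hp
      have h1 : (x a).coeff u ≠ 0 := fun h0 => hp (by rw [h0, zero_mul])
      have h2 : y (a⁻¹ * fabMap G g) ≠ 0 := by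
        intro h0; apply hp; rw [h0]; simp
      exact Set.mem_biUnion ⟨fun h0 => h1 (by rw [h0]; rfl), h2⟩
        ⟨u, Finsupp.mem_support_iff.mpr h1, rfl⟩
    have hsupp : (Function.support fun a =>
        x a * nuFab s hs a (y (a⁻¹ * fabMap G g)) * muFab s hs a (a⁻¹ * fabMap G g)).Finite := by
      apply hT.subset
      intro a ha
      simp only [Function.mem_support] at ha
      constructor
      · intro h0; exact ha (by rw [h0, zero_mul, zero_mul])
      · intro h0; apply ha; rw [h0]; simp [nuFab]
    have hRHS : mulG (iotaFab s hs x) (iotaFab s hs y) g =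
        ∑ᶠ p : Fab G × ↥(fabK G), Fterm s hs x y g p.1 p.2 := by
      have key : ∀ p : Fab G × ↥(fabK G),
          iotaFab s hs x (fabEquiv s hs p) * iotaFab s hs y ((fabEquiv s hs p)⁻¹ * g) =
            Fterm s hs x y g p.1 p.2 := by
        rintro ⟨a, u⟩
        show iotaFab s hs x ((u : G) * s a) * iotaFab s hs y (((u : G) * s a)⁻¹ * g) = _
        rw [iota_apply]
        have harg : fabMap G (((u : G) * s a)⁻¹ * g) = a⁻¹ * fabMap G g := by
          simp [map_mul, map_inv, fabMap_coe, hs]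
        rw [iota_eq s hs y harg, Fterm]
        congr 1
        exact congrArg (fun v : ↥(fabK G) => (y (a⁻¹ * fabMap G g)).coeff v)
          (Subtype.ext (by group))
      simp only [mulG]
      calc ∑ᶠ h : G, iotaFab s hs x h * iotaFab s hs y (h⁻¹ * g)
          = ∑ᶠ p : Fab G × ↥(fabK G), iotaFab s hs x (fabEquiv s hs p) *
              iotaFab s hs y ((fabEquiv s hs p)⁻¹ * g) :=
            (finsum_comp_equiv (fabEquiv s hs)).symm
        _ = _ := finsum_congr key
    rw [iota_eq s hs _ rfl]
    simp only [mulFab]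
    rw [finsum_coeff_apply _ hsupp, hRHS, finsum_prod_eq _ hP]
    exact finsum_congr (fun a => term_eval s hs x y g a)
  · -- unit
    funext g
    rw [iota_eq s hs _ rfl]
    simp only [oneFab, oneG]
    by_cases h : fabMap G g = 1
    · rw [if_pos h, MonoidAlgebra.coeff_single, Finsupp.single_apply]
      by_cases hg : g = 1
      · subst hg
        rw [if_pos rfl, if_pos]
        exact Subtype.ext (by simp [h, hs1])
      · rw [if_neg hg, if_neg]
        intro heq
        apply hg
        have h2 := congrArg Subtype.val heq
        simp only at h2
        rw [h, hs1] at h2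
        simp at h2
        exact h2.symm
    · rw [if_neg h, if_neg]
      · simp
      · intro hg; exact h (by rw [hg, map_one])
end
end

section
/- Let G be a finitely generated group and φ : G → ℤ a nontrivial homomorphism. Then ker φ is finitely generated if and only if both φ and −φ lie in the Bieri–Neumann–Strebel invariant Σ(G). -/
/-- The full subgraph of the Cayley graph of `G` (with respect to the generating set `T`)
spanned by `{g : ψ g ≥ 0}` is connected: any two vertices with nonnegative `ψ`-value are
joined by an edge-path through vertices of nonnegative `ψ`-value.  For a nonzero character
`ψ`, this is the defining condition for `ψ` to lie in the BNS invariant `Σ(G)`. -/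
def connPos {G : Type*} [Group G] (T : Set G) (ψ : G → ℝ) : Prop :=
  ∀ g h : G, 0 ≤ ψ g → 0 ≤ ψ h →
    ∃ (n : ℕ) (p : ℕ → G), p 0 = g ∧ p n = h ∧ (∀ i ≤ n, 0 ≤ ψ (p i)) ∧
      ∀ i < n, ∃ t ∈ T, p (i + 1) = p i * t ∨ p (i + 1) = p i * t⁻¹

namespace BNSproof

variable {G : Type*} [Group G]

/-- `ℓ` is a letter over the generating set `T` (an element of `T` or an inverse). -/
def IsLetter (T : Set G) (ℓ : G) : Prop := ∃ t ∈ T, ℓ = t ∨ ℓ = t⁻¹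

lemma IsLetter.inv {T : Set G} {ℓ : G} (h : IsLetter T ℓ) : IsLetter T ℓ⁻¹ := by
  obtain ⟨t, ht, h | h⟩ := h
  · exact ⟨t, ht, Or.inr (by rw [h])⟩
  · exact ⟨t, ht, Or.inl (by rw [h, inv_inv])⟩

def OkL (T : Set G) (L : List G) : Prop := ∀ ℓ ∈ L, IsLetter T ℓ

/-- There is a `T`-edge-path from `g` to `h` all of whose vertices `v` satisfy `b ≤ f v`. -/
def Good (T : Set G) (f : G → ℤ) (b : ℤ) (g h : G) : Prop :=
  ∃ L : List G, OkL T L ∧ g * L.prod = h ∧ ∀ i, b ≤ f (g * (L.take i).prod)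

namespace Good

variable {T : Set G} {f : G → ℤ} {b b' : ℤ} {g h k : G}

lemma refl (hb : b ≤ f g) : Good T f b g g :=
  ⟨[], by intro ℓ hℓ; simp at hℓ, by simp, fun i => by simpa using hb⟩

lemma mono (hb : b' ≤ b) (hg : Good T f b g h) : Good T f b' g h := by
  obtain ⟨L, h1, h2, h3⟩ := hg
  exact ⟨L, h1, h2, fun i => le_trans hb (h3 i)⟩

lemma trans (h1 : Good T f b g h) (h2 : Good T f b h k) : Good T f b g k := by
  obtain ⟨L1, o1, e1, v1⟩ := h1
  obtain ⟨L2, o2, e2, v2⟩ := h2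
  refine ⟨L1 ++ L2, ?_, by rw [List.prod_append, ← mul_assoc, e1, e2], ?_⟩
  · intro ℓ hℓ
    rcases List.mem_append.1 hℓ with h | h
    · exact o1 ℓ h
    · exact o2 ℓ h
  · intro i
    rcases le_or_gt i L1.length with hi | hi
    · rw [List.take_append_of_le_length hi]; exact v1 i
    · obtain ⟨j, rfl⟩ : ∃ j, i = L1.length + j := ⟨i - L1.length, by omega⟩
      rw [List.take_length_add_append, List.prod_append, ← mul_assoc]
      have : g * L1.prod = h := e1
      rw [this]
      exact v2 j

lemma step {ℓ : G} (hℓ : IsLetter T ℓ) (h1 : b ≤ f g) (h2 : b ≤ f (g * ℓ)) :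
    Good T f b g (g * ℓ) := by
  refine ⟨[ℓ], by intro x hx; rw [List.mem_singleton] at hx; exact hx ▸ hℓ, by simp, ?_⟩
  intro i
  match i with
  | 0 => simpa using h1
  | (j+1) => simpa using h2

lemma symm (hg : Good T f b g h) : Good T f b h g := by
  obtain ⟨L, o, e, v⟩ := hg
  induction L generalizing g with
  | nil => simp at e; subst e; exact refl (by simpa using v 0)
  | cons ℓ L ih =>
    have hIH : Good T f b h (g * ℓ) := by
      refine ih (g := g * ℓ) (fun x hx => o x (List.mem_cons_of_mem _ hx)) ?_ ?_
      · rw [← e, List.prod_cons, mul_assoc]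
      · intro i
        have := v (i + 1)
        simpa [List.prod_cons, mul_assoc] using this
    refine hIH.trans ?_
    have hstep : Good T f b (g * ℓ) ((g * ℓ) * ℓ⁻¹) := by
      refine step (IsLetter.inv (o ℓ (List.mem_cons_self))) ?_ ?_
      · simpa [List.prod_cons, mul_assoc] using v 1
      · simpa using v 0
    simpa using hstep

end Good

section homf
variable {f : G → ℤ} (hf : ∀ a b : G, f (a * b) = f a + f b)

/-- package `f` as a monoid hom to `Multiplicative ℤ`. -/
noncomputable def mhom (f : G → ℤ) (hf : ∀ a b : G, f (a * b) = f a + f b) :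
    G →* Multiplicative ℤ :=
  MonoidHom.mk' (fun g => Multiplicative.ofAdd (f g)) (by
    intro a b
    simp [hf a b])

include hf

lemma f_one : f 1 = 0 := by
  have := hf 1 1; simp at this; omega

lemma f_inv (g : G) : f g⁻¹ = - f g := by
  have := hf g g⁻¹; simp [f_one hf] at this; omega

lemma f_zpow (z : G) (k : ℤ) : f (z ^ k) = k * f z := by
  have h : ∀ g : G, f g = Multiplicative.toAdd (mhom f hf g) := fun g => rfl
  rw [h, map_zpow, toAdd_zpow, ← h, smul_eq_mul]

lemma f_neg_hom : ∀ a b : G, (fun x => - f x) (a * b) = (fun x => - f x) a + (fun x => - f x) b := by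
  intro a b; simp [hf a b]; ring

end homf

section dip
variable {f : G → ℤ}

/-- every list has a lower "dip" bound for the `f`-values of its prefix products. -/
lemma exists_dip (hf : ∀ a b : G, f (a * b) = f a + f b) (L : List G) :
    ∃ d : ℤ, 0 ≤ d ∧ ∀ i, -d ≤ f ((L.take i).prod) := by
  induction L with
  | nil => exact ⟨0, le_refl _, fun i => by simp [f_one hf]⟩
  | cons ℓ L ih =>
    obtain ⟨d, hd0, hd⟩ := ih
    refine ⟨d + |f ℓ|, by have := abs_nonneg (f ℓ); omega, fun i => ?_⟩
    match i with
    | 0 => have := abs_nonneg (f ℓ); simp [f_one hf]; omega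
    | (j+1) =>
      simp only [List.take_succ_cons, List.prod_cons, hf]
      have h1 := hd j
      have h2 := neg_abs_le (f ℓ)
      omega

end dip

section genword
variable {f : G → ℤ}

/-- every element of the group generated by `T` is a product of letters. -/
lemma exists_word {T : Set G} (hT : Subgroup.closure T = ⊤) (g : G) :
    ∃ L : List G, OkL T L ∧ L.prod = g := by
  have hg : g ∈ Subgroup.closure T := by rw [hT]; trivial
  induction hg using Subgroup.closure_induction with
  | mem x hx => exact ⟨[x], fun ℓ hℓ => by rw [List.mem_singleton] at hℓ; exact hℓ ▸ ⟨x, hx, Or.inl rfl⟩, by simp⟩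
  | one => exact ⟨[], fun ℓ hℓ => by simp at hℓ, by simp⟩
  | mul x y hx hy ihx ihy =>
    obtain ⟨L1, o1, e1⟩ := ihx
    obtain ⟨L2, o2, e2⟩ := ihy
    exact ⟨L1 ++ L2, fun ℓ hℓ => by rcases List.mem_append.1 hℓ with h | h; exacts [o1 ℓ h, o2 ℓ h],
      by rw [List.prod_append, e1, e2]⟩
  | inv x hx ihx =>
    obtain ⟨L, o, e⟩ := ihx
    refine ⟨(L.map (·⁻¹)).reverse, ?_, ?_⟩
    · intro ℓ hℓ
      rw [List.mem_reverse, List.mem_map] at hℓ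
      obtain ⟨a, ha, rfl⟩ := hℓ
      exact (o a ha).inv
    · rw [← e, ← List.prod_inv_reverse]
end genword

section existsm
variable {f : G → ℤ}

lemma exists_m (hf : ∀ a b : G, f (a * b) = f a + f b) (hnt : ∃ g : G, f g ≠ 0) :
    ∃ (m : ℤ) (τ : G), 0 < m ∧ f τ = m ∧ ∀ x : G, m ∣ f x := by
  have hpos : ∃ n : ℕ, 0 < n ∧ ∃ τ : G, f τ = (n : ℤ) := by
    obtain ⟨g, hg⟩ := hnt
    rcases lt_or_gt_of_ne hg with h | h
    · exact ⟨(-f g).toNat, by omega, g⁻¹, by rw [f_inv hf]; omega⟩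
    · exact ⟨(f g).toNat, by omega, g, by omega⟩
  classical
  let n := Nat.find hpos
  obtain ⟨hn0, τ, hτ⟩ := Nat.find_spec hpos
  refine ⟨(n : ℤ), τ, by exact_mod_cast hn0, hτ, fun x => ?_⟩
  by_contra hdvd
  set r := f x % (n : ℤ) with hr
  have hr0 : 0 ≤ r := Int.emod_nonneg _ (by positivity)
  have hrn : r < (n : ℤ) := Int.emod_lt_of_pos _ (by exact_mod_cast hn0)
  have hrne : r ≠ 0 := fun h => hdvd (Int.dvd_of_emod_eq_zero h)
  have hwit : f (x * τ ^ (-(f x / (n : ℤ)))) = r := by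
    rw [hf, f_zpow hf, hτ, hr, Int.emod_def]; ring
  have : r.toNat < n := by omega
  exact absurd ⟨by omega, _, by rw [hwit]; omega⟩ (Nat.find_min hpos this)

end existsm
section fwdmachine
variable {T : Set G} {f : G → ℤ}

lemma good_of_word (hf : ∀ a b : G, f (a * b) = f a + f b)
    {L : List G} (hok : OkL T L) (x : G) {d : ℤ}
    (hd : ∀ i, -d ≤ f ((L.take i).prod)) : Good T f (f x - d) x (x * L.prod) :=
  ⟨L, hok, rfl, fun i => by rw [hf]; have := hd i; omega⟩

lemma exists_climb (hf : ∀ a b : G, f (a * b) = f a + f b)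
    (hT : Subgroup.closure T = ⊤) (hnt : ∃ g : G, f g ≠ 0) :
    ∃ L : List G, OkL T L ∧ 0 < f L.prod ∧ ∀ i, 0 ≤ f ((L.take i).prod) := by
  have f1 : f 1 = 0 := f_one hf
  obtain ⟨z, hz⟩ : ∃ z : G, 0 < f z := by
    obtain ⟨g, hg⟩ := hnt
    rcases lt_or_gt_of_ne hg with h | h
    · exact ⟨g⁻¹, by rw [f_inv hf]; omega⟩
    · exact ⟨g, h⟩
  obtain ⟨L₀, hok₀, hL₀⟩ := exists_word hT z
  obtain ⟨i₀, hi₀mem, hmin⟩ := Finset.exists_min_image (Finset.range (L₀.length+1))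
    (fun j => f ((L₀.take j).prod)) ⟨0, by simp⟩
  have hi₀ : i₀ ≤ L₀.length := Nat.lt_succ_iff.mp (Finset.mem_range.1 hi₀mem)
  have hmin' : ∀ j, f ((L₀.take i₀).prod) ≤ f ((L₀.take j).prod) := by
    intro j
    rcases le_or_gt j L₀.length with h | h
    · exact hmin j (Finset.mem_range.2 (by omega))
    · rw [show L₀.take j = L₀ from List.take_of_length_le (by omega)]
      have := hmin L₀.length (Finset.mem_range.2 (by omega))
      rwa [List.take_length] at this
  have hsplit : f ((L₀.take i₀).prod) + f ((L₀.drop i₀).prod) = f z := by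
    rw [← hf, List.prod_take_mul_prod_drop, hL₀]
  refine ⟨L₀.drop i₀ ++ L₀.take i₀, ?_, ?_, ?_⟩
  · intro ℓ hℓ
    rcases List.mem_append.1 hℓ with h | h
    · exact hok₀ ℓ (List.drop_subset i₀ L₀ h)
    · exact hok₀ ℓ (List.take_subset i₀ L₀ h)
  · rw [List.prod_append, hf]; omega
  · intro i
    rcases le_or_gt i (L₀.drop i₀).length with hi | hi
    · rw [List.take_append_of_le_length hi, List.take_drop]
      have h2 : (L₀.take i₀).prod * ((L₀.take (i₀ + i)).drop i₀).prod = (L₀.take (i₀+i)).prod := by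
        have := List.prod_take_mul_prod_drop (L₀.take (i₀+i)) i₀
        rwa [List.take_take, min_eq_left (by omega)] at this
      have h3 := hmin' (i₀ + i)
      have h4 : f ((L₀.take i₀).prod) + f (((L₀.take (i₀ + i)).drop i₀).prod)
          = f ((L₀.take (i₀+i)).prod) := by rw [← hf, h2]
      omega
    · rw [List.take_append, List.take_of_length_le (by omega),
        List.prod_append, hf, List.take_take]
      have h3 := hmin' (min (i - (L₀.drop i₀).length) i₀)
      omega

lemma f_pow (hf : ∀ a b : G, f (a * b) = f a + f b) (z : G) (n : ℕ) :
    f (z ^ n) = (n : ℤ) * f z := by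
  rw [← zpow_natCast, f_zpow hf]

lemma climb_iter (hf : ∀ a b : G, f (a * b) = f a + f b)
    {Lc : List G} (hok : OkL T Lc) (hpref : ∀ i, 0 ≤ f ((Lc.take i).prod))
    (hpos : 0 < f Lc.prod) :
    ∀ (k : ℕ) (x : G), Good T f (f x) x (x * Lc.prod ^ k) := by
  intro k
  induction k with
  | zero => intro x; rw [pow_zero, mul_one]; exact Good.refl (le_refl _)
  | succ k ih =>
    intro x
    refine (ih x).trans ?_
    have h := good_of_word (d := 0) hf hok (x * Lc.prod ^ k) (fun i => by have := hpref i; omega)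
    rw [mul_assoc, ← pow_succ] at h
    refine (h.mono ?_)
    have : f (x * Lc.prod ^ k) = f x + (k:ℤ) * f Lc.prod := by rw [hf, f_pow hf]
    have hk : 0 ≤ (k : ℤ) := Int.natCast_nonneg k
    nlinarith

lemma vert_pos (hf : ∀ a b : G, f (a * b) = f a + f b)
    {τ : G} {Lτ : List G} (hok : OkL T Lτ) (hLτ : Lτ.prod = τ) {dτ : ℤ}
    (hd : ∀ i, -dτ ≤ f ((Lτ.take i).prod)) (hτpos : 0 ≤ f τ) :
    ∀ (n : ℕ) (x : G), Good T f (f x - dτ) x (x * τ ^ n) := by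
  intro n
  induction n with
  | zero =>
    intro x; rw [pow_zero, mul_one]
    exact Good.refl (by have : -dτ ≤ f ((Lτ.take 0).prod) := hd 0; simp [f_one hf] at this; omega)
  | succ n ih =>
    intro x
    refine (ih x).trans ?_
    have h := good_of_word hf hok (x * τ ^ n) hd
    rw [hLτ, mul_assoc, ← pow_succ] at h
    refine h.mono ?_
    have : f (x * τ ^ n) = f x + (n:ℤ) * f τ := by rw [hf, f_pow hf]
    have hn : 0 ≤ (n:ℤ) := Int.natCast_nonneg n
    nlinarith

lemma vert_neg (hf : ∀ a b : G, f (a * b) = f a + f b)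
    {τ : G} {Lτ' : List G} (hok : OkL T Lτ') (hLτ' : Lτ'.prod = τ⁻¹) {d' : ℤ}
    (hd : ∀ i, -d' ≤ f ((Lτ'.take i).prod)) (hτpos : 0 ≤ f τ) :
    ∀ (n : ℕ) (x : G), Good T f (f x - (n:ℤ) * f τ - d') x (x * (τ⁻¹) ^ n) := by
  intro n
  induction n with
  | zero =>
    intro x; rw [pow_zero, mul_one]
    refine Good.refl ?_
    have : -d' ≤ f ((Lτ'.take 0).prod) := hd 0
    simp [f_one hf] at this
    omega
  | succ n ih =>
    intro x
    have h1 := good_of_word hf hok x hd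
    rw [hLτ'] at h1
    have h2 := ih (x * τ⁻¹)
    rw [mul_assoc, ← pow_succ'] at h2
    have hfx : f (x * τ⁻¹) = f x - f τ := by rw [hf, f_inv hf]; ring
    refine (h1.mono ?_).trans (h2.mono ?_)
    · have hn : 0 ≤ (n:ℤ) := Int.natCast_nonneg n
      nlinarith
    · rw [hfx]; push_cast; ring_nf; omega

lemma horiz (hf : ∀ a b : G, f (a * b) = f a + f b)
    {Q : G → Prop} {D : ℤ} (hD0 : 0 ≤ D)
    (hQ : ∀ u, Q u → f u = 0 ∧ ∃ L, OkL T L ∧ L.prod = u ∧ ∀ i, -D ≤ f ((L.take i).prod)) :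
    ∀ (M : List G), (∀ u ∈ M, Q u) → ∀ x : G, Good T f (f x - D) x (x * M.prod) := by
  intro M
  induction M with
  | nil => intro _ x; rw [List.prod_nil, mul_one]; exact Good.refl (by omega)
  | cons u M ih =>
    intro hM x
    obtain ⟨hu0, L, hok, hLu, hdip⟩ := hQ u (hM u (List.mem_cons_self))
    have h1 := good_of_word hf hok x hdip
    rw [hLu] at h1
    have h2 := ih (fun v hv => hM v (List.mem_cons_of_mem _ hv)) (x * u)
    rw [List.prod_cons, ← mul_assoc] at *
    refine h1.trans (h2.mono ?_)
    rw [hf, hu0]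
    omega

lemma finset_bound {α : Type*} (s : Finset α) (P : α → ℤ → Prop)
    (hmono : ∀ a d d', d ≤ d' → P a d → P a d')
    (h : ∀ a ∈ s, ∃ d, P a d) : ∃ d : ℤ, 0 ≤ d ∧ ∀ a ∈ s, P a d := by
  classical
  induction s using Finset.induction_on with
  | empty => exact ⟨0, le_refl _, fun a ha => absurd ha (Finset.notMem_empty a)⟩
  | @insert a s hnotmem ih =>
    obtain ⟨d, hd0, hd⟩ := ih (fun b hb => h b (Finset.mem_insert_of_mem hb))
    obtain ⟨da, hda⟩ := h a (Finset.mem_insert_self a s)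
    refine ⟨max d da, by omega, fun b hb => ?_⟩
    rcases Finset.mem_insert.1 hb with rfl | hb
    · exact hmono _ _ _ (le_max_right _ _) hda
    · exact hmono _ _ _ (le_max_left _ _) (hd b hb)

end fwdmachine

section fwdmain
variable {T : Set G} {f : G → ℤ}

lemma fwd (hf : ∀ a b : G, f (a * b) = f a + f b) (hT : Subgroup.closure T = ⊤)
    (hnt : ∃ g : G, f g ≠ 0) (Sfin : Finset G) (hSker : ∀ s ∈ Sfin, f s = 0)
    (hSgen : ∀ g : G, f g = 0 → g ∈ Subgroup.closure (Sfin : Set G)) :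
    ∀ g h : G, 0 ≤ f g → 0 ≤ f h → Good T f 0 g h := by
  obtain ⟨m, τ, hm, hτ, hdvd⟩ := exists_m hf hnt
  obtain ⟨Lc, hokc, hposc, hprefc⟩ := exists_climb hf hT hnt
  obtain ⟨Lτ, hokτ, hLτ⟩ := exists_word hT τ
  obtain ⟨dτ, hdτ0, hdτ⟩ := exists_dip hf Lτ
  obtain ⟨Lτ', hokτ', hLτ'⟩ := exists_word hT τ⁻¹
  obtain ⟨d', hd'0, hd'⟩ := exists_dip hf Lτ'
  obtain ⟨D, hD0, hD⟩ := finset_bound Sfin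
    (fun s d => (∃ L, OkL T L ∧ L.prod = s ∧ ∀ i, -d ≤ f ((L.take i).prod)) ∧
      (∃ L, OkL T L ∧ L.prod = s⁻¹ ∧ ∀ i, -d ≤ f ((L.take i).prod)))
    (by
      rintro s d d' hdd' ⟨⟨L1, h1, h2, h3⟩, ⟨L2, h4, h5, h6⟩⟩
      exact ⟨⟨L1, h1, h2, fun i => le_trans (by omega) (h3 i)⟩,
        ⟨L2, h4, h5, fun i => le_trans (by omega) (h6 i)⟩⟩)
    (by
      intro s _
      obtain ⟨L1, h1, h2⟩ := exists_word hT s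
      obtain ⟨e1, he1, hd1⟩ := exists_dip hf L1
      obtain ⟨L2, h3, h4⟩ := exists_word hT s⁻¹
      obtain ⟨e2, he2, hd2⟩ := exists_dip hf L2
      exact ⟨max e1 e2, ⟨L1, h1, h2, fun i => le_trans (by omega) (hd1 i)⟩,
        ⟨L2, h3, h4, fun i => le_trans (by omega) (hd2 i)⟩⟩)
  have hQ : ∀ u : G, (u ∈ Sfin ∨ u⁻¹ ∈ Sfin) →
      f u = 0 ∧ ∃ L, OkL T L ∧ L.prod = u ∧ ∀ i, -D ≤ f ((L.take i).prod) := by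
    intro u hu
    rcases hu with hu | hu
    · exact ⟨hSker u hu, (hD u hu).1⟩
    · refine ⟨?_, ?_⟩
      · have := hSker _ hu; have := f_inv hf u; omega
      · have h2 := (hD _ hu).2
        simpa using h2
  intro g h hg hh
  set k : ℕ := (dτ + d' + D + 1).toNat with hk
  have hkE : (k : ℤ) = dτ + d' + D + 1 := Int.toNat_of_nonneg (by omega)
  have hfLc : 1 ≤ f Lc.prod := hposc
  set x := g * Lc.prod ^ k with hx
  set y := h * Lc.prod ^ k with hy
  have hfx : f x = f g + (k:ℤ) * f Lc.prod := by rw [hx, hf, f_pow hf]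
  have hfy : f y = f h + (k:ℤ) * f Lc.prod := by rw [hy, hf, f_pow hf]
  have hxE : dτ + d' + D + 1 ≤ f x := by nlinarith
  have hyE : dτ + d' + D + 1 ≤ f y := by nlinarith
  set w : G := x⁻¹ * y with hw
  have hfw : f w = f y - f x := by rw [hw, hf, f_inv hf]; ring
  set a : ℤ := f w / m with ha
  have ham : a * m = f w := Int.ediv_mul_cancel (hdvd w)
  set nn : G := τ ^ (-a) * w with hnn
  have hfnn : f nn = 0 := by rw [hnn, hf, f_zpow hf, hτ]; linarith [ham, hfw]
  have hend : x * τ ^ a * nn = y := by rw [hnn, hw]; group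
  have hfxa : f (x * τ ^ a) = f y := by rw [hf, f_zpow hf, hτ]; linarith [ham, hfw]
  -- the four pieces
  have p1 : Good T f 0 g x := (climb_iter hf hokc hprefc hposc k g).mono hg
  have p4 : Good T f 0 y h := ((climb_iter hf hokc hprefc hposc k h).mono hh).symm
  have p2 : Good T f 0 x (x * τ ^ a) := by
    rcases le_or_gt 0 a with hva | hva
    · have hna : ((a.toNat : ℤ)) = a := Int.toNat_of_nonneg hva
      have := vert_pos hf hokτ hLτ hdτ (by omega) a.toNat x
      rw [show τ ^ (a.toNat) = τ ^ a by rw [← zpow_natCast, hna]] at this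
      exact this.mono (by linarith [hxE, hd'0, hD0])
    · have hna : (((-a).toNat : ℤ)) = -a := Int.toNat_of_nonneg (by omega)
      have := vert_neg hf hokτ' hLτ' hd' (by omega) (-a).toNat x
      rw [show (τ⁻¹) ^ ((-a).toNat) = τ ^ a by
        rw [← zpow_natCast, hna, inv_zpow, ← zpow_neg, neg_neg]] at this
      refine this.mono ?_
      rw [hna, hτ]
      linarith [ham, hfw, hyE, hdτ0, hD0]
  have p3 : Good T f 0 (x * τ ^ a) y := by
    have hmem : nn ∈ Subgroup.closure (Sfin : Set G) := hSgen nn hfnn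
    have hmem2 : nn ∈ Submonoid.closure ((Sfin : Set G) ∪ (Sfin : Set G)⁻¹) := by
      rw [← Subgroup.closure_toSubmonoid]
      exact hmem
    obtain ⟨M, hM, hMprod⟩ := Submonoid.exists_list_of_mem_closure hmem2
    have hMQ : ∀ u ∈ M, (u ∈ Sfin ∨ u⁻¹ ∈ Sfin) := by
      intro u hu
      rcases hM u hu with h1 | h1
      · exact Or.inl h1
      · exact Or.inr (Set.mem_inv.1 h1)
    have := horiz hf hD0 hQ M hMQ (x * τ ^ a)
    rw [hMprod] at this
    have h5 : x * τ ^ a * nn = y := hend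
    rw [h5] at this
    rw [hfxa] at this
    exact this.mono (by linarith [hyE, hdτ0, hd'0])
  exact p1.trans (p2.trans (p3.trans p4))

end fwdmain

section bwdmachine
variable {T : Set G} {f : G → ℤ}

/-- the conjugated generators `τ^i (ℓ τ^{-f(ℓ)/m}) τ^{-i}` for letters `ℓ` and `a ≤ i ≤ b`. -/
def gset (T : Set G) (f : G → ℤ) (τ : G) (m : ℤ) (a b : ℤ) : Set G :=
  {x | ∃ ℓ, IsLetter T ℓ ∧ ∃ i : ℤ, a ≤ i ∧ i ≤ b ∧
    x = τ ^ i * (ℓ * τ ^ (-(f ℓ / m))) * τ ^ (-i)}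

lemma gset_mono {τ : G} {m a b a' b' : ℤ} (ha : a' ≤ a) (hb : b ≤ b') :
    gset T f τ m a b ⊆ gset T f τ m a' b' := by
  rintro x ⟨ℓ, hℓ, i, hi1, hi2, rfl⟩
  exact ⟨ℓ, hℓ, i, by omega, by omega, rfl⟩

lemma f_gset_eq_zero (hf : ∀ a b : G, f (a * b) = f a + f b) {τ : G} {m a b : ℤ}
    (hm : 0 < m) (hτ : f τ = m) (hdvd : ∀ x : G, m ∣ f x)
    {x : G} (hx : x ∈ gset T f τ m a b) : f x = 0 := by
  obtain ⟨ℓ, hℓ, i, hi1, hi2, rfl⟩ := hx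
  have h1 := Int.ediv_mul_cancel (hdvd ℓ)
  simp only [hf, f_zpow hf, hτ, neg_mul]
  omega

lemma lemA (hf : ∀ a b : G, f (a * b) = f a + f b) {m : ℤ} (hm : 0 < m)
    (hdvd : ∀ x : G, m ∣ f x) {τ : G} (hτ : f τ = m) (B : ℤ)
    (L : List G) (hok : OkL T L)
    (hht : ∀ i, 0 ≤ f ((L.take i).prod) ∧ f ((L.take i).prod) ≤ B * m) :
    L.prod * τ ^ (-(f L.prod / m)) ∈ Subgroup.closure (gset T f τ m 0 B) := by
  induction L using List.reverseRecOn with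
  | nil =>
    simp only [List.prod_nil, f_one hf, Int.zero_ediv, neg_zero, zpow_zero, mul_one, one_mul]
    exact Subgroup.one_mem _
  | append_singleton L y ih =>
    have hok' : OkL T L := fun ℓ hℓ => hok ℓ (List.mem_append_left _ hℓ)
    have hht' : ∀ i, 0 ≤ f ((L.take i).prod) ∧ f ((L.take i).prod) ≤ B * m := by
      intro i
      rcases le_or_gt i L.length with hi | hi
      · have := hht i
        rwa [List.take_append_of_le_length hi] at this
      · rw [List.take_of_length_le (by omega)]
        have := hht L.length
        rwa [List.take_append_of_le_length (le_refl _), List.take_length] at this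
    have ihm := ih hok' hht'
    -- arithmetic on exponents
    obtain ⟨p, hp⟩ := hdvd L.prod
    obtain ⟨q, hq⟩ := hdvd y
    have hL : f L.prod / m = p := by rw [hp, Int.mul_ediv_cancel_left _ (by omega)]
    have hy : f y / m = q := by rw [hq, Int.mul_ediv_cancel_left _ (by omega)]
    have hsum : f (L ++ [y]).prod = m * (p + q) := by
      rw [List.prod_append, List.prod_singleton, hf, hp, hq]; ring
    have hLy : f (L ++ [y]).prod / m = p + q := by
      rw [hsum, Int.mul_ediv_cancel_left _ (by omega)]
    -- generator membership
    have hyletter : IsLetter T y := hok y (List.mem_append_right _ (List.mem_singleton_self y))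
    have hp0 : 0 ≤ p := by
      have := (hht' L.length).1
      rw [List.take_length, hp] at this
      nlinarith
    have hpB : p ≤ B := by
      have := (hht' L.length).2
      rw [List.take_length, hp] at this
      nlinarith
    have hgen : τ ^ p * (y * τ ^ (-(f y / m))) * τ ^ (-p) ∈ Subgroup.closure (gset T f τ m 0 B) :=
      Subgroup.subset_closure ⟨y, hyletter, p, hp0, hpB, rfl⟩
    have heq : (L ++ [y]).prod * τ ^ (-(f (L ++ [y]).prod / m)) =
        (L.prod * τ ^ (-(f L.prod / m))) * (τ ^ p * (y * τ ^ (-(f y / m))) * τ ^ (-p)) := by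
      rw [hL, hy, hLy, List.prod_append, List.prod_singleton]
      rw [show (-(p+q)) = -p + -q by ring, zpow_add]
      group
    rw [heq]
    exact Subgroup.mul_mem _ ihm hgen

lemma exists_B (hf : ∀ a b : G, f (a * b) = f a + f b) {m : ℤ} (hm : 0 < m) (L : List G) :
    ∃ B : ℤ, 0 ≤ B ∧ ∀ i, f ((L.take i).prod) ≤ B * m := by
  obtain ⟨d, hd0, hd⟩ := exists_dip (f := fun x => -f x) (f_neg_hom hf) L
  refine ⟨d, hd0, fun i => ?_⟩
  have := hd i
  nlinarith

lemma conj_gset {τ : G} {m a b : ℤ} (j : ℤ) {x : G}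
    (hx : x ∈ Subgroup.closure (gset T f τ m a b)) :
    τ ^ j * x * τ ^ (-j) ∈ Subgroup.closure (gset T f τ m (a + j) (b + j)) := by
  have hmap : τ ^ j * x * (τ ^ j)⁻¹ ∈
      (Subgroup.closure (gset T f τ m a b)).map (MulAut.conj (τ ^ j)).toMonoidHom :=
    ⟨x, hx, rfl⟩
  rw [MonoidHom.map_closure] at hmap
  rw [show τ ^ (-j) = (τ ^ j)⁻¹ from zpow_neg τ j]
  refine Subgroup.closure_mono ?_ hmap
  rintro z ⟨s, ⟨ℓ, hℓ, i, hi1, hi2, rfl⟩, rfl⟩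
  refine ⟨ℓ, hℓ, i + j, by omega, by omega, ?_⟩
  simp only [MulEquiv.coe_toMonoidHom, MulAut.conj_apply]
  rw [show (-(i+j)) = -i + -j by ring, show i + j = j + i from add_comm j i ▸ rfl]
  rw [zpow_add, zpow_add]
  group

end bwdmachine

section bwdmain
variable {f : G → ℤ}

lemma bwd (Tf : Finset G) (hT : Subgroup.closure (Tf : Set G) = ⊤)
    (hf : ∀ a b : G, f (a * b) = f a + f b) (hnt : ∃ g : G, f g ≠ 0)
    (hpos : ∀ g h : G, 0 ≤ f g → 0 ≤ f h → Good (Tf : Set G) f 0 g h)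
    (hneg : ∀ g h : G, 0 ≤ -f g → 0 ≤ -f h → Good (Tf : Set G) (fun x => -f x) 0 g h) :
    ∃ S : Set G, S.Finite ∧ ∀ g : G, g ∈ Subgroup.closure S ↔ f g = 0 := by
  classical
  obtain ⟨m, τ, hm, hτ, hdvd⟩ := exists_m hf hnt
  set T : Set G := (Tf : Set G) with hTdef
  have hf' := f_neg_hom hf
  have hdvd' : ∀ x : G, m ∣ (fun x => -f x) x := fun x => dvd_neg.mpr (hdvd x)
  have hτ' : (fun x => -f x) τ⁻¹ = m := by simp only [f_inv hf]; omega
  -- membership with nonnegative conjugating exponents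
  have mem_pos : ∀ n : G, f n = 0 →
      ∃ B : ℤ, 0 ≤ B ∧ n ∈ Subgroup.closure (gset T f τ m 0 B) := by
    intro n hn
    obtain ⟨L, hok, hend, hht⟩ := hpos 1 n (by rw [f_one hf]) (le_of_eq hn.symm)
    rw [one_mul] at hend
    obtain ⟨B, hB0, hB⟩ := exists_B hf hm L
    have hht' : ∀ i, 0 ≤ f ((L.take i).prod) ∧ f ((L.take i).prod) ≤ B * m := by
      intro i
      refine ⟨?_, hB i⟩
      have := hht i
      rwa [one_mul] at this
    have hmem := lemA hf hm hdvd hτ B L hok hht'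
    rw [hend, hn, Int.zero_ediv, neg_zero, zpow_zero, mul_one] at hmem
    exact ⟨B, hB0, hmem⟩
  have mem_neg : ∀ n : G, f n = 0 →
      ∃ B : ℤ, 0 ≤ B ∧ n ∈ Subgroup.closure (gset T f τ m (-B) 0) := by
    intro n hn
    obtain ⟨L, hok, hend, hht⟩ := hneg 1 n (by rw [f_one hf]; omega) (by omega)
    rw [one_mul] at hend
    obtain ⟨B, hB0, hB⟩ := exists_B (f := fun x => -f x) hf' hm L
    have hht' : ∀ i, 0 ≤ (fun x => -f x) ((L.take i).prod) ∧
        (fun x => -f x) ((L.take i).prod) ≤ B * m := by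
      intro i
      refine ⟨?_, hB i⟩
      have := hht i
      rwa [one_mul] at this
    have hmem := lemA (f := fun x => -f x) hf' hm hdvd' (τ := τ⁻¹) hτ' B L hok hht'
    rw [hend] at hmem
    have hz : -((fun x => -f x) n / m) = 0 := by simp [hn]
    rw [hz, zpow_zero, mul_one] at hmem
    refine ⟨B, hB0, Subgroup.closure_mono ?_ hmem⟩
    rintro x ⟨ℓ, hℓ, i, hi1, hi2, rfl⟩
    obtain ⟨q, hq⟩ := hdvd ℓ
    have h1 : f ℓ / m = q := by rw [hq, Int.mul_ediv_cancel_left _ (by omega)]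
    have h2 : (fun x => -f x) ℓ / m = -q := by
      simp only
      rw [hq, show -(m * q) = m * (-q) by ring, Int.mul_ediv_cancel_left _ (by omega)]
    refine ⟨ℓ, hℓ, -i, by omega, by omega, ?_⟩
    rw [h1, h2]
    group
  -- letters finset and uniform bound from the negative side
  set TT : Finset G := Tf ∪ Tf.image (·⁻¹) with hTT
  have hletter_mem : ∀ ℓ : G, IsLetter T ℓ → ℓ ∈ TT := by
    rintro ℓ ⟨t, ht, h | h⟩
    · subst h; exact Finset.mem_union_left _ ht
    · subst h; exact Finset.mem_union_right _ (Finset.mem_image_of_mem _ ht)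
  have hfu : ∀ ℓ : G, f (τ * (ℓ * τ ^ (-(f ℓ / m))) * τ⁻¹) = 0 := by
    intro ℓ
    have h1 := Int.ediv_mul_cancel (hdvd ℓ)
    simp only [hf, f_zpow hf, f_inv hf, hτ, neg_mul]
    omega
  obtain ⟨b, hb0, hbP⟩ := finset_bound TT
    (fun y d => τ * (y * τ ^ (-(f y / m))) * τ⁻¹ ∈ Subgroup.closure (gset T f τ m (-d) 0))
    (fun y d d' hdd' hy => Subgroup.closure_mono (gset_mono (by omega) (le_refl 0)) hy)
    (fun y _ => (mem_neg _ (hfu y)).imp (fun B hB => hB.2))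
  set K : Subgroup G := Subgroup.closure (gset T f τ m 0 b) with hK
  have up : ∀ k : ℕ, ∀ x ∈ gset T f τ m 0 (b + k), x ∈ K := by
    intro k
    induction k with
    | zero =>
      intro x hx
      exact Subgroup.subset_closure (by simpa using hx)
    | succ k ih =>
      rintro x ⟨ℓ, hℓ, i, hi1, hi2, rfl⟩
      rcases le_or_gt i (b + k) with hcase | hcase
      · exact ih _ ⟨ℓ, hℓ, i, hi1, hcase, rfl⟩
      · have hrel := hbP ℓ (hletter_mem ℓ hℓ)
        have hconj := conj_gset (T := T) (i - 1) hrel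
        have heq : τ ^ (i-1) * (τ * (ℓ * τ ^ (-(f ℓ / m))) * τ⁻¹) * τ ^ (-(i-1)) =
            τ ^ i * (ℓ * τ ^ (-(f ℓ / m))) * τ ^ (-i) := by
          have e1 : τ ^ i = τ ^ (i-1) * τ := by
            rw [← zpow_add_one]; ring_nf
          have e2 : τ ^ (-i) = τ⁻¹ * τ ^ (-(i-1)) := by
            rw [← zpow_neg_one, ← zpow_add]; ring_nf
          rw [e1, e2]; group
        rw [heq] at hconj
        have hsub : gset T f τ m (-b + (i-1)) (0 + (i-1)) ⊆ gset T f τ m 0 (b + k) :=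
          gset_mono (by omega) (by omega)
        exact (Subgroup.closure_le K).2 (fun y hy => ih y hy)
          (Subgroup.closure_mono hsub hconj)
  refine ⟨gset T f τ m 0 b, ?_, ?_⟩
  · -- finiteness
    have hfin : (((Tf : Set G) ∪ (fun t => t⁻¹) '' (Tf : Set G)) ×ˢ (Set.Icc (0:ℤ) b)).Finite :=
      Set.Finite.prod (Set.Finite.union Tf.finite_toSet (Set.Finite.image _ Tf.finite_toSet))
        (Set.finite_Icc _ _)
    refine Set.Finite.subset (Set.Finite.image
      (fun p : G × ℤ => τ ^ p.2 * (p.1 * τ ^ (-(f p.1 / m))) * τ ^ (-p.2)) hfin) ?_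
    rintro x ⟨ℓ, ⟨t, ht, hc | hc⟩, i, hi1, hi2, rfl⟩
    · exact ⟨(ℓ, i), ⟨Or.inl (hc ▸ ht), hi1, hi2⟩, rfl⟩
    · exact ⟨(ℓ, i), ⟨Or.inr ⟨t, ht, hc.symm⟩, hi1, hi2⟩, rfl⟩
  · -- closure equals kernel
    intro g
    constructor
    · intro hg
      let Kker : Subgroup G :=
        { carrier := {x : G | f x = 0}
          one_mem' := f_one hf
          mul_mem' := by
            intro a b ha hb
            simp only [Set.mem_setOf_eq] at *
            rw [hf]; omega
          inv_mem' := by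
            intro a ha
            simp only [Set.mem_setOf_eq] at *
            rw [f_inv hf]; omega }
      have : Subgroup.closure (gset T f τ m 0 b) ≤ Kker :=
        (Subgroup.closure_le _).2 (fun x hx => f_gset_eq_zero hf hm hτ hdvd hx)
      exact this hg
    · intro hg
      obtain ⟨B, hB0, hmem⟩ := mem_pos g hg
      have hsub : gset T f τ m 0 B ⊆ gset T f τ m 0 (b + (B - b).toNat) :=
        gset_mono (le_refl 0) (by have := Int.self_le_toNat (B - b); omega)
      exact (Subgroup.closure_le K).2 (fun y hy => up _ y hy)
        (Subgroup.closure_mono hsub hmem)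

end bwdmain

section conversions
variable {T : Set G} {f : G → ℤ} {ψ : G → ℝ}

lemma conn_of_good (hψ : ∀ x, 0 ≤ ψ x ↔ 0 ≤ f x)
    (hGood : ∀ g h : G, 0 ≤ f g → 0 ≤ f h → Good T f 0 g h) : connPos T ψ := by
  intro g h hg hh
  obtain ⟨L, hok, hend, hht⟩ := hGood g h ((hψ g).1 hg) ((hψ h).1 hh)
  refine ⟨L.length, fun i => g * (L.take i).prod, by simp, ?_, ?_, ?_⟩
  · show g * (L.take L.length).prod = h
    rw [List.take_length]; exact hend
  · intro i _
    exact (hψ _).2 (hht i)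
  · intro i hi
    obtain ⟨t, ht, hc⟩ := hok L[i] (List.getElem_mem hi)
    refine ⟨t, ht, ?_⟩
    have hstep : g * (L.take (i+1)).prod = (g * (L.take i).prod) * L[i] := by
      rw [List.prod_take_succ _ _ hi, mul_assoc]
    rcases hc with hc | hc
    · refine Or.inl ?_
      show g * (L.take (i+1)).prod = g * (L.take i).prod * t
      rw [hstep, hc]
    · refine Or.inr ?_
      show g * (L.take (i+1)).prod = g * (L.take i).prod * t⁻¹
      rw [hstep, hc]

lemma good_of_conn (hψ : ∀ x, 0 ≤ ψ x ↔ 0 ≤ f x)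
    (hconn : connPos T ψ) : ∀ g h : G, 0 ≤ f g → 0 ≤ f h → Good T f 0 g h := by
  intro g h hg hh
  obtain ⟨n, p, hp0, hpn, hposv, hedge⟩ := hconn g h ((hψ g).2 hg) ((hψ h).2 hh)
  have claim : ∀ k, k ≤ n → Good T f 0 (p 0) (p k) := by
    intro k
    induction k with
    | zero => intro _; exact Good.refl ((hψ _).1 (hposv 0 (Nat.zero_le n)))
    | succ k ih =>
      intro hk
      refine (ih (by omega)).trans ?_
      obtain ⟨t, ht, hc⟩ := hedge k (by omega)
      have h1 : 0 ≤ f (p k) := (hψ _).1 (hposv k (by omega))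
      have h2 : 0 ≤ f (p (k+1)) := (hψ _).1 (hposv (k+1) (by omega))
      rcases hc with hc | hc
      · have := Good.step (T := T) (f := f) (b := 0) (g := p k) (ℓ := t)
          ⟨t, ht, Or.inl rfl⟩ h1 (hc ▸ h2)
        rwa [← hc] at this
      · have := Good.step (T := T) (f := f) (b := 0) (g := p k) (ℓ := t⁻¹)
          ⟨t, ht, Or.inr rfl⟩ h1 (hc ▸ h2)
        rwa [← hc] at this
  rw [← hp0, ← hpn]
  exact claim n (le_refl n)

end conversions

end BNSproof

open BNSproof

/-- **Bieri–Neumann–Strebel.** Let `G` be a finitely generated group (with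
finite generating set `T`) and `φ : G → ℤ` a nontrivial homomorphism.  Then `ker φ` is
finitely generated if and only if both `φ` and `-φ` lie in the BNS invariant `Σ(G)`. -/
theorem stmt_6 {G : Type*} [Group G] (T : Finset G)
    (hT : Subgroup.closure (T : Set G) = ⊤)
    (φ : G →* Multiplicative ℤ) (hφ : φ ≠ 1) :
    φ.ker.FG ↔
      (connPos (T : Set G) (fun g => ((Multiplicative.toAdd (φ g) : ℤ) : ℝ)) ∧
       connPos (T : Set G) (fun g => -((Multiplicative.toAdd (φ g) : ℤ) : ℝ))) := by
  classical
  set f : G → ℤ := fun g => Multiplicative.toAdd (φ g) with hfdef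
  have hf : ∀ a b : G, f (a * b) = f a + f b := by
    intro a b
    simp only [hfdef, map_mul]
    rfl
  have hker : ∀ g : G, f g = 0 ↔ g ∈ φ.ker := by
    intro g
    rw [MonoidHom.mem_ker]
    constructor
    · intro h
      have : Multiplicative.toAdd (φ g) = Multiplicative.toAdd (1 : Multiplicative ℤ) := h
      exact Multiplicative.toAdd.injective this
    · intro h
      simp [hfdef, h]
  have hnt : ∃ g : G, f g ≠ 0 := by
    by_contra hc
    push_neg at hc
    apply hφ
    ext g
    have := (hker g).1 (hc g)
    rwa [MonoidHom.mem_ker] at this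
  have hψ1 : ∀ x : G, 0 ≤ (fun g => ((Multiplicative.toAdd (φ g) : ℤ) : ℝ)) x ↔ 0 ≤ f x := by
    intro x
    simp [hfdef]
  have hψ2 : ∀ x : G,
      0 ≤ (fun g => -((Multiplicative.toAdd (φ g) : ℤ) : ℝ)) x ↔ 0 ≤ (fun y => -f y) x := by
    intro x
    simp only [hfdef, le_neg, neg_zero]
    exact ⟨fun h => by exact_mod_cast h, fun h => by exact_mod_cast h⟩
  have hnt' : ∃ g : G, (fun y => -f y) g ≠ 0 := by
    obtain ⟨g, hg⟩ := hnt
    exact ⟨g, by simpa using hg⟩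
  constructor
  · intro hFG
    obtain ⟨S, hScl, hSfin⟩ := (Subgroup.fg_iff _).1 hFG
    set Sfin : Finset G := hSfin.toFinset with hSfd
    have hcoe : (Sfin : Set G) = S := hSfin.coe_toFinset
    have hSker : ∀ s ∈ Sfin, f s = 0 := by
      intro s hs
      refine (hker s).2 ?_
      rw [← hScl]
      exact Subgroup.subset_closure (hSfin.mem_toFinset.1 hs)
    have hSgen : ∀ g : G, f g = 0 → g ∈ Subgroup.closure (Sfin : Set G) := by
      intro g hg
      rw [hcoe, hScl]
      exact (hker g).1 hg
    refine ⟨conn_of_good hψ1 (fwd hf hT hnt Sfin hSker hSgen), conn_of_good hψ2 ?_⟩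
    refine fwd (f := fun y => -f y) (f_neg_hom hf) hT hnt' Sfin ?_ ?_
    · intro s hs
      simp [hSker s hs]
    · intro g hg
      exact hSgen g (by simpa using hg)
  · rintro ⟨h1, h2⟩
    have hpos := good_of_conn hψ1 h1
    have hneg := good_of_conn hψ2 h2
    obtain ⟨S, hSfin, hSiff⟩ := bwd T hT hf hnt hpos (by exact hneg)
    rw [Subgroup.fg_iff]
    refine ⟨S, ?_, hSfin⟩
    ext g
    rw [hSiff g, hker g]
end

section
/- Let G be a group with a biordering ≤ and let RG be a twisted group ring over a skew-field R (i.e., R is a division ring and the coefficient ring of the twisted group ring is a division ring). Then the set F_≤(RG) of functions x : G → R whose support is ≤-well-ordered, equipped with twisted convolution, is a ring containing RG; moreover if R is a skew-field then F_≤(RG) is a skew-field. -/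
noncomputable section

open scoped Classical

/-- The Malcev–Neumann set: functions `G → R` whose support is well-ordered with respect to
the (bi)ordering of `G`. -/
def MNset (R G : Type*) [Ring R] [LinearOrder G] : Set (G → R) :=
  {x : G → R | {g : G | x g ≠ 0}.IsWF}

/-- The twisted convolution product. -/
def mulMN {R G : Type*} [Ring R] [Group G] (ν : G → R ≃+* R) (μ : G → G → Rˣ)
    (x y : G → R) : G → R :=
  fun g => ∑ᶠ a : G, x a * ν a (y (a⁻¹ * g)) * (μ a (a⁻¹ * g) : R)

/-- The multiplicative unit. -/
def oneMN {R G : Type*} [Ring R] [Group G] : G → R :=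
  fun g => if g = 1 then 1 else 0

set_option linter.unusedSectionVars false
open Function

namespace MN

variable {R G : Type*} [DivisionRing R] [Group G] [LinearOrder G]
  {ν : G → R ≃+* R} {μ : G → G → Rˣ}

lemma mem_MNset {x : G → R} : x ∈ MNset R G ↔ (support x).IsWF := Iff.rfl

lemma finite_antidiag {S T : Set G}
    (h1 : ∀ a b c : G, a ≤ b → a * c ≤ b * c)
    (h2 : ∀ a b c : G, a ≤ b → c * a ≤ c * b)
    (hS : S.IsWF) (hT : T.IsWF) (g : G) :
    {p : G × G | p.1 ∈ S ∧ p.2 ∈ T ∧ p.1 * p.2 = g}.Finite := by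
  by_contra hinf
  have hinf' : {p : G × G | p.1 ∈ S ∧ p.2 ∈ T ∧ p.1 * p.2 = g}.Infinite := hinf
  obtain f := hinf'.natEmbedding
  have hPWO : (S ×ˢ T).IsPWO :=
    (Set.isPWO_iff_isWF.mpr hS).prod (Set.isPWO_iff_isWF.mpr hT)
  obtain ⟨m, n, hmn, hle⟩ := hPWO.exists_lt (f := fun k => (f k : G × G))
    (fun k => ⟨(f k).2.1, (f k).2.2.1⟩)
  have hp := (f m).2
  have hq := (f n).2
  set p := ((f m : G × G)) with hpdef
  set q := ((f n : G × G)) with hqdef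
  obtain ⟨-, -, hpg⟩ := hp
  obtain ⟨-, -, hqg⟩ := hq
  have h3 : p.1 * p.2 ≤ q.1 * p.2 := h1 _ _ _ hle.1
  have h4 : q.1 * p.2 ≤ q.1 * q.2 := h2 _ _ _ hle.2
  have h5 : q.1 * p.2 = g := le_antisymm (hqg ▸ h4) (hpg ▸ h3)
  have h6 : p.2 = q.2 := mul_left_cancel (h5.trans hqg.symm)
  have h7 : p.1 = q.1 := mul_right_cancel (b := p.2) (hpg.trans h5.symm)
  have : f m = f n := Subtype.ext (Prod.ext h7 h6)
  exact hmn.ne (f.injective this)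

lemma mul_eq_sum {x y : G → R} {g : G} {F : Finset (G × G)}
    (hF : ∀ p : G × G, x p.1 ≠ 0 → y p.2 ≠ 0 → p.1 * p.2 = g → p ∈ F)
    (hF' : ∀ p ∈ F, p.1 * p.2 = g) :
    mulMN ν μ x y g = ∑ p ∈ F, x p.1 * ν p.1 (y p.2) * (μ p.1 p.2 : R) := by
  have hsupp : support (fun a => x a * ν a (y (a⁻¹ * g)) * (μ a (a⁻¹ * g) : R))
      ⊆ ↑(F.image Prod.fst) := by
    intro a ha
    have hxa : x a ≠ 0 := by
      intro h; apply ha; simp [h]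
    have hya : y (a⁻¹ * g) ≠ 0 := by
      intro h; apply ha; simp [h]
    have := hF (a, a⁻¹ * g) hxa hya (by simp)
    simpa using Finset.mem_image_of_mem Prod.fst this
  rw [mulMN, finsum_eq_sum_of_support_subset _ hsupp]
  rw [Finset.sum_image (fun p hp q hq hpq => by
    have := (hF' p hp).trans (hF' q hq).symm
    rw [hpq] at this
    exact Prod.ext hpq (mul_left_cancel this))]
  refine Finset.sum_congr rfl fun p hp => ?_
  have h2 : p.1⁻¹ * g = p.2 := by
    rw [← hF' p hp]; group
  rw [h2]

lemma support_mul (x y : G → R) :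
    support (mulMN ν μ x y) ⊆ (fun p : G × G => p.1 * p.2) '' (support x ×ˢ support y) := by
  intro g hg
  rw [mem_support, mulMN] at hg
  have : ∃ a, x a * ν a (y (a⁻¹ * g)) * (μ a (a⁻¹ * g) : R) ≠ 0 := by
    by_contra h
    push_neg at h
    exact hg (finsum_eq_zero_of_forall_eq_zero h)
  obtain ⟨a, ha⟩ := this
  refine ⟨(a, a⁻¹ * g), ⟨?_, ?_⟩, by simp⟩
  · intro h; apply ha; simp [h]
  · intro h; apply ha; simp [h]

lemma mul_mem (h1 : ∀ a b c : G, a ≤ b → a * c ≤ b * c)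
    (h2 : ∀ a b c : G, a ≤ b → c * a ≤ c * b)
    {x y : G → R} (hx : x ∈ MNset R G) (hy : y ∈ MNset R G) :
    mulMN ν μ x y ∈ MNset R G := by
  rw [mem_MNset] at *
  refine Set.IsWF.mono ?_ (support_mul x y)
  rw [← Set.isPWO_iff_isWF]
  refine Set.IsPWO.image_of_monotone
    ((Set.isPWO_iff_isWF.mpr hx).prod (Set.isPWO_iff_isWF.mpr hy)) ?_
  intro p q hpq
  exact le_trans (h1 _ _ _ hpq.1) (h2 _ _ _ hpq.2)

variable (hν1 : ν 1 = RingEquiv.refl R) (hμ1 : ∀ g : G, μ 1 g = 1 ∧ μ g 1 = 1)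

lemma one_mul' (hν1 : ν 1 = RingEquiv.refl R) (hμ1 : ∀ g : G, μ 1 g = 1 ∧ μ g 1 = 1)
    (x : G → R) : mulMN ν μ oneMN x = x := by
  funext g
  rw [mulMN, finsum_eq_single _ (1 : G) (fun a ha => by simp [oneMN, ha])]
  simp [oneMN, hν1, (hμ1 g).1]

lemma mul_one' (hμ1 : ∀ g : G, μ 1 g = 1 ∧ μ g 1 = 1)
    (x : G → R) : mulMN ν μ x oneMN = x := by
  funext g
  rw [mulMN, finsum_eq_single _ (g : G) (fun a ha => by
    have : a⁻¹ * g ≠ 1 := by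
      intro h
      rw [inv_mul_eq_one] at h
      exact ha h
    simp [oneMN, this])]
  simp [oneMN, (hμ1 g).2]

lemma finsum_neg {α : Type*} (f : α → R) : (∑ᶠ a, -f a) = -∑ᶠ a, f a := by
  by_cases hf : (support f).Finite
  · rw [finsum_eq_sum f hf,
      finsum_eq_sum_of_support_subset (fun a => -f a)
        (s := hf.toFinset) (by simp [support_neg]),
      ← Finset.sum_neg_distrib]
  · rw [finsum_of_infinite_support hf, finsum_of_infinite_support (by
      simpa [support_neg] using hf), neg_zero]

lemma neg_mul' (x y : G → R) : mulMN ν μ (-x) y = -(mulMN ν μ x y) := by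
  funext g
  rw [mulMN]
  simp only [Pi.neg_apply, neg_mul]
  rw [finsum_neg]
  rfl

lemma mul_neg' (x y : G → R) : mulMN ν μ x (-y) = -(mulMN ν μ x y) := by
  funext g
  rw [mulMN]
  simp only [Pi.neg_apply, map_neg, neg_mul, mul_neg]
  rw [finsum_neg]
  rfl

lemma left_distrib' (h1 : ∀ a b c : G, a ≤ b → a * c ≤ b * c)
    (h2 : ∀ a b c : G, a ≤ b → c * a ≤ c * b)
    {x y z : G → R} (hx : x ∈ MNset R G) (hy : y ∈ MNset R G) (hz : z ∈ MNset R G) :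
    mulMN ν μ x (y + z) = mulMN ν μ x y + mulMN ν μ x z := by
  funext g
  have hfy := finite_antidiag h1 h2 hx hy g
  have hfz := finite_antidiag h1 h2 hx hz g
  set F : Finset (G × G) := hfy.toFinset ∪ hfz.toFinset with hFdef
  have hF' : ∀ p ∈ F, p.1 * p.2 = g := by
    intro p hp
    rcases Finset.mem_union.mp hp with h | h
    · exact (hfy.mem_toFinset.mp h).2.2
    · exact (hfz.mem_toFinset.mp h).2.2
  have e1 : mulMN ν μ x (y + z) g = ∑ p ∈ F, x p.1 * ν p.1 ((y + z) p.2) * (μ p.1 p.2 : R) :=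
    mul_eq_sum (fun p hxp hyzp hpg => by
      rcases (by
        by_contra h
        push_neg at h
        apply hyzp
        simp [Pi.add_apply, h.1, h.2] : y p.2 ≠ 0 ∨ z p.2 ≠ 0) with h | h
      · exact Finset.mem_union_left _ (hfy.mem_toFinset.mpr ⟨hxp, h, hpg⟩)
      · exact Finset.mem_union_right _ (hfz.mem_toFinset.mpr ⟨hxp, h, hpg⟩)) hF'
  have e2 : mulMN ν μ x y g = ∑ p ∈ F, x p.1 * ν p.1 (y p.2) * (μ p.1 p.2 : R) :=
    mul_eq_sum (fun p hxp hyp hpg =>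
      Finset.mem_union_left _ (hfy.mem_toFinset.mpr ⟨hxp, hyp, hpg⟩)) hF'
  have e3 : mulMN ν μ x z g = ∑ p ∈ F, x p.1 * ν p.1 (z p.2) * (μ p.1 p.2 : R) :=
    mul_eq_sum (fun p hxp hzp hpg =>
      Finset.mem_union_right _ (hfz.mem_toFinset.mpr ⟨hxp, hzp, hpg⟩)) hF'
  rw [Pi.add_apply, e1, e2, e3, ← Finset.sum_add_distrib]
  refine Finset.sum_congr rfl fun p _ => ?_
  rw [Pi.add_apply, map_add, mul_add, add_mul]

lemma right_distrib' (h1 : ∀ a b c : G, a ≤ b → a * c ≤ b * c)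
    (h2 : ∀ a b c : G, a ≤ b → c * a ≤ c * b)
    {x y z : G → R} (hx : x ∈ MNset R G) (hy : y ∈ MNset R G) (hz : z ∈ MNset R G) :
    mulMN ν μ (x + y) z = mulMN ν μ x z + mulMN ν μ y z := by
  funext g
  have hfx := finite_antidiag h1 h2 hx hz g
  have hfy := finite_antidiag h1 h2 hy hz g
  set F : Finset (G × G) := hfx.toFinset ∪ hfy.toFinset with hFdef
  have hF' : ∀ p ∈ F, p.1 * p.2 = g := by
    intro p hp
    rcases Finset.mem_union.mp hp with h | h
    · exact (hfx.mem_toFinset.mp h).2.2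
    · exact (hfy.mem_toFinset.mp h).2.2
  have e1 : mulMN ν μ (x + y) z g = ∑ p ∈ F, (x + y) p.1 * ν p.1 (z p.2) * (μ p.1 p.2 : R) :=
    mul_eq_sum (fun p hxyp hzp hpg => by
      rcases (by
        by_contra h
        push_neg at h
        apply hxyp
        simp [Pi.add_apply, h.1, h.2] : x p.1 ≠ 0 ∨ y p.1 ≠ 0) with h | h
      · exact Finset.mem_union_left _ (hfx.mem_toFinset.mpr ⟨h, hzp, hpg⟩)
      · exact Finset.mem_union_right _ (hfy.mem_toFinset.mpr ⟨h, hzp, hpg⟩)) hF'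
  have e2 : mulMN ν μ x z g = ∑ p ∈ F, x p.1 * ν p.1 (z p.2) * (μ p.1 p.2 : R) :=
    mul_eq_sum (fun p hxp hzp hpg =>
      Finset.mem_union_left _ (hfx.mem_toFinset.mpr ⟨hxp, hzp, hpg⟩)) hF'
  have e3 : mulMN ν μ y z g = ∑ p ∈ F, y p.1 * ν p.1 (z p.2) * (μ p.1 p.2 : R) :=
    mul_eq_sum (fun p hyp hzp hpg =>
      Finset.mem_union_right _ (hfy.mem_toFinset.mpr ⟨hyp, hzp, hpg⟩)) hF'
  rw [Pi.add_apply, e1, e2, e3, ← Finset.sum_add_distrib]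
  refine Finset.sum_congr rfl fun p _ => ?_
  rw [Pi.add_apply, add_mul, add_mul]
lemma isWF_mul {S T : Set G}
    (h1 : ∀ a b c : G, a ≤ b → a * c ≤ b * c)
    (h2 : ∀ a b c : G, a ≤ b → c * a ≤ c * b)
    (hS : S.IsWF) (hT : T.IsWF) :
    ((fun p : G × G => p.1 * p.2) '' (S ×ˢ T)).IsWF := by
  rw [← Set.isPWO_iff_isWF]
  refine Set.IsPWO.image_of_monotone
    ((Set.isPWO_iff_isWF.mpr hS).prod (Set.isPWO_iff_isWF.mpr hT)) ?_
  intro p q hpq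
  exact le_trans (h1 _ _ _ hpq.1) (h2 _ _ _ hpq.2)

lemma key (hν : ∀ g g' : G, ∀ r : R,
      ν g (ν g' r) = (μ g g' : R) * ν (g * g') r * ((μ g g')⁻¹ : Rˣ))
    (hμ : ∀ g g' g'' : G,
      (μ g g' : R) * (μ (g * g') g'' : R) = ν g (μ g' g'') * (μ g (g' * g'') : R))
    (a b c : G) (r s t : R) :
    r * ν a (s * ν b t * (μ b c : R)) * (μ a (b * c) : R)
      = r * ν a s * (μ a b : R) * ν (a * b) t * (μ (a * b) c : R) := by
  rw [map_mul, map_mul, hν a b t]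
  have hinner : (((μ a b)⁻¹ : Rˣ) : R) * (ν a ((μ b c : R)) * (μ a (b * c) : R))
      = (μ (a * b) c : R) := by
    rw [← hμ a b c, ← mul_assoc, Units.inv_mul, one_mul]
  calc r * (ν a s * ((μ a b : R) * ν (a * b) t * (((μ a b)⁻¹ : Rˣ) : R)) * ν a (μ b c))
        * (μ a (b * c) : R)
      = r * ν a s * (μ a b : R) * ν (a * b) t *
          ((((μ a b)⁻¹ : Rˣ) : R) * (ν a ((μ b c : R)) * (μ a (b * c) : R))) := by
        simp only [mul_assoc]
    _ = _ := by rw [hinner]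

lemma mul_assoc' (h1 : ∀ a b c : G, a ≤ b → a * c ≤ b * c)
    (h2 : ∀ a b c : G, a ≤ b → c * a ≤ c * b)
    (hν : ∀ g g' : G, ∀ r : R,
      ν g (ν g' r) = (μ g g' : R) * ν (g * g') r * ((μ g g')⁻¹ : Rˣ))
    (hμ : ∀ g g' g'' : G,
      (μ g g' : R) * (μ (g * g') g'' : R) = ν g (μ g' g'') * (μ g (g' * g'') : R))
    {x y z : G → R} (hx : x ∈ MNset R G) (hy : y ∈ MNset R G) (hz : z ∈ MNset R G) :
    mulMN ν μ (mulMN ν μ x y) z = mulMN ν μ x (mulMN ν μ y z) := by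
  funext g
  have hT : {t : G × G × G |
      x t.1 ≠ 0 ∧ y t.2.1 ≠ 0 ∧ z t.2.2 ≠ 0 ∧ t.1 * t.2.1 * t.2.2 = g}.Finite := by
    have hxy := isWF_mul h1 h2 (hx : (support x).IsWF) (hy : (support y).IsWF)
    have hA := finite_antidiag h1 h2 hxy (hz : (support z).IsWF) g
    have hB : ∀ q : G × G,
        ({p : G × G | p.1 ∈ support x ∧ p.2 ∈ support y ∧ p.1 * p.2 = q.1}).Finite :=
      fun q => finite_antidiag h1 h2 hx hy q.1
    refine Set.Finite.subset
      (hA.biUnion (fun q _ => ((hB q).image (fun pr => (pr.1, pr.2, q.2))))) ?_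
    rintro ⟨a, b, c⟩ ⟨hxa, hyb, hzc, habc⟩
    refine Set.mem_biUnion (show ((a * b, c) : G × G) ∈ _ from ?_) ?_
    · exact ⟨⟨(a, b), ⟨hxa, hyb⟩, rfl⟩, hzc, habc⟩
    · exact ⟨(a, b), ⟨hxa, hyb, rfl⟩, rfl⟩
  set Ft := hT.toFinset with hFtdef
  have memFt : ∀ t : G × G × G, t ∈ Ft ↔
      (x t.1 ≠ 0 ∧ y t.2.1 ≠ 0 ∧ z t.2.2 ≠ 0 ∧ t.1 * t.2.1 * t.2.2 = g) :=
    fun t => hT.mem_toFinset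
  -- the LHS
  have lhs : mulMN ν μ (mulMN ν μ x y) z g = ∑ t ∈ Ft,
      x t.1 * ν t.1 (y t.2.1) * (μ t.1 t.2.1 : R) * ν (t.1 * t.2.1) (z t.2.2) *
        (μ (t.1 * t.2.1) t.2.2 : R) := by
    set proj : G × G × G → G × G := fun t => (t.1 * t.2.1, t.2.2) with hprojdef
    set Fo := Ft.image proj with hFodef
    have hFo' : ∀ p ∈ Fo, p.1 * p.2 = g ∧ z p.2 ≠ 0 := by
      intro p hp
      obtain ⟨t, ht, rfl⟩ := Finset.mem_image.mp hp
      obtain ⟨-, -, hz2, habc⟩ := (memFt t).mp ht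
      exact ⟨habc, hz2⟩
    rw [mul_eq_sum (F := Fo) (fun p hxyp hzp hpg => by
        obtain ⟨⟨a, b⟩, ⟨hxa, hyb⟩, hab⟩ := support_mul x y hxyp
        refine Finset.mem_image.mpr ⟨(a, b, p.2), (memFt _).mpr ⟨hxa, hyb, hzp, by
          simp only at hab ⊢
          rw [hab, hpg]⟩, ?_⟩
        simp only [hprojdef]
        simp only at hab
        rw [hab]) (fun p hp => (hFo' p hp).1)]
    have inner : ∀ p ∈ Fo, mulMN ν μ x y p.1 =
        ∑ t ∈ Ft.filter (fun t => proj t = p),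
          x t.1 * ν t.1 (y t.2.1) * (μ t.1 t.2.1 : R) := by
      intro p hp
      obtain ⟨hpg, hz2⟩ := hFo' p hp
      rw [mul_eq_sum (F := (Ft.filter (fun t => proj t = p)).image (fun t => (t.1, t.2.1)))
        (fun q hxq hyq hq => Finset.mem_image.mpr ⟨(q.1, q.2, p.2), Finset.mem_filter.mpr
          ⟨(memFt _).mpr ⟨hxq, hyq, hz2, by rw [hq, hpg]⟩, by
            simp only [hprojdef]
            rw [hq]⟩, rfl⟩)
        (fun q hq => by
          obtain ⟨t, ht, rfl⟩ := Finset.mem_image.mp hq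
          have h3 := (Finset.mem_filter.mp ht).2
          exact (Prod.ext_iff.mp h3).1)]
      rw [Finset.sum_image (fun t ht t' ht' htt => by
        have h3 := (Finset.mem_filter.mp ht).2
        have h3' := (Finset.mem_filter.mp ht').2
        have h22 : t.2.2 = t'.2.2 := by
          have := (Prod.ext_iff.mp (h3.trans h3'.symm)).2
          simpa [hprojdef] using this
        have e := Prod.ext_iff.mp htt
        exact Prod.ext e.1 (Prod.ext e.2 h22))]
    calc ∑ p ∈ Fo, mulMN ν μ x y p.1 * ν p.1 (z p.2) * (μ p.1 p.2 : R)
        = ∑ p ∈ Fo, ∑ t ∈ Ft.filter (fun t => proj t = p),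
            x t.1 * ν t.1 (y t.2.1) * (μ t.1 t.2.1 : R) * ν (t.1 * t.2.1) (z t.2.2) *
              (μ (t.1 * t.2.1) t.2.2 : R) := by
          refine Finset.sum_congr rfl fun p hp => ?_
          rw [inner p hp, Finset.sum_mul, Finset.sum_mul]
          refine Finset.sum_congr rfl fun t ht => ?_
          have h3 := (Finset.mem_filter.mp ht).2
          rw [← h3]
      _ = _ := Finset.sum_fiberwise_of_maps_to
          (fun t ht => Finset.mem_image_of_mem proj ht) _
  -- the RHS
  have rhs : mulMN ν μ x (mulMN ν μ y z) g = ∑ t ∈ Ft,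
      x t.1 * ν t.1 (y t.2.1 * ν t.2.1 (z t.2.2) * (μ t.2.1 t.2.2 : R)) *
        (μ t.1 (t.2.1 * t.2.2) : R) := by
    set proj : G × G × G → G × G := fun t => (t.1, t.2.1 * t.2.2) with hprojdef
    set Fo := Ft.image proj with hFodef
    have hFo' : ∀ p ∈ Fo, p.1 * p.2 = g ∧ x p.1 ≠ 0 := by
      intro p hp
      obtain ⟨t, ht, rfl⟩ := Finset.mem_image.mp hp
      obtain ⟨hx1, -, -, habc⟩ := (memFt t).mp ht
      exact ⟨by rw [← mul_assoc]; exact habc, hx1⟩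
    rw [mul_eq_sum (F := Fo) (fun p hxp hyzp hpg => by
        obtain ⟨⟨b, c⟩, ⟨hyb, hzc⟩, hbc⟩ := support_mul y z hyzp
        refine Finset.mem_image.mpr ⟨(p.1, b, c), (memFt _).mpr ⟨hxp, hyb, hzc, by
          simp only at hbc ⊢
          rw [mul_assoc, hbc, hpg]⟩, ?_⟩
        simp only [hprojdef]
        simp only at hbc
        rw [hbc]) (fun p hp => (hFo' p hp).1)]
    have inner : ∀ p ∈ Fo, mulMN ν μ y z p.2 =
        ∑ t ∈ Ft.filter (fun t => proj t = p),
          y t.2.1 * ν t.2.1 (z t.2.2) * (μ t.2.1 t.2.2 : R) := by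
      intro p hp
      obtain ⟨hpg, hx1⟩ := hFo' p hp
      rw [mul_eq_sum (F := (Ft.filter (fun t => proj t = p)).image (fun t => t.2))
        (fun q hyq hzq hq => Finset.mem_image.mpr ⟨(p.1, q), Finset.mem_filter.mpr
          ⟨(memFt _).mpr ⟨hx1, hyq, hzq, by rw [mul_assoc, hq, hpg]⟩, by
            simp only [hprojdef]
            rw [hq]⟩, rfl⟩)
        (fun q hq => by
          obtain ⟨t, ht, rfl⟩ := Finset.mem_image.mp hq
          have h3 := (Finset.mem_filter.mp ht).2
          have := (Prod.ext_iff.mp h3).2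
          simpa [hprojdef] using this)]
      rw [Finset.sum_image (fun t ht t' ht' htt => by
        have h3 := (Finset.mem_filter.mp ht).2
        have h3' := (Finset.mem_filter.mp ht').2
        have h11 : t.1 = t'.1 := by
          have := (Prod.ext_iff.mp (h3.trans h3'.symm)).1
          simpa [hprojdef] using this
        exact Prod.ext h11 htt)]
    calc ∑ p ∈ Fo, x p.1 * ν p.1 (mulMN ν μ y z p.2) * (μ p.1 p.2 : R)
        = ∑ p ∈ Fo, ∑ t ∈ Ft.filter (fun t => proj t = p),
            x t.1 * ν t.1 (y t.2.1 * ν t.2.1 (z t.2.2) * (μ t.2.1 t.2.2 : R)) *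
              (μ t.1 (t.2.1 * t.2.2) : R) := by
          refine Finset.sum_congr rfl fun p hp => ?_
          rw [inner p hp, map_sum, Finset.mul_sum, Finset.sum_mul]
          refine Finset.sum_congr rfl fun t ht => ?_
          have h3 := (Finset.mem_filter.mp ht).2
          rw [← h3]
      _ = _ := Finset.sum_fiberwise_of_maps_to
          (fun t ht => Finset.mem_image_of_mem proj ht) _
  rw [lhs, rhs]
  exact Finset.sum_congr rfl fun t _ => (key hν hμ t.1 t.2.1 t.2.2 _ _ _).symm
lemma zero_mem : (0 : G → R) ∈ MNset R G := by
  rw [mem_MNset]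
  exact (Set.finite_empty.subset (by simp)).isWF

lemma finite_support_mem (x : G → R) (h : {g : G | x g ≠ 0}.Finite) : x ∈ MNset R G := h.isWF

lemma add_mem {x y : G → R} (hx : x ∈ MNset R G) (hy : y ∈ MNset R G) :
    x + y ∈ MNset R G := by
  rw [mem_MNset] at *
  exact (hx.union hy).mono (support_add x y)

lemma neg_mem {x : G → R} (hx : x ∈ MNset R G) : -x ∈ MNset R G := by
  rw [mem_MNset] at *
  rwa [support_neg]

def single (g : G) (r : R) : G → R := fun h => if h = g then r else 0

lemma single_mem (g : G) (r : R) : single g r ∈ MNset R G := by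
  refine finite_support_mem _ ((Set.finite_singleton g).subset ?_)
  intro h hh
  by_contra hne
  exact hh (if_neg hne)

lemma oneMN_mem : oneMN (R := R) (G := G) ∈ MNset R G := by
  refine finite_support_mem _ ((Set.finite_singleton (1 : G)).subset ?_)
  intro h hh
  by_contra hne
  exact hh (if_neg hne)

lemma single_mul (g : G) (r : R) (x : G → R) :
    mulMN ν μ (single g r) x = fun h => r * ν g (x (g⁻¹ * h)) * (μ g (g⁻¹ * h) : R) := by
  funext h
  rw [mulMN, finsum_eq_single _ g (fun a ha => by simp [single, ha])]
  simp [single]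

lemma mul_single (x : G → R) (g : G) (r : R) :
    mulMN ν μ x (single g r) = fun h => x (h * g⁻¹) * ν (h * g⁻¹) r * (μ (h * g⁻¹) g : R) := by
  funext h
  rw [mulMN, finsum_eq_single _ (h * g⁻¹) (fun a ha => by
    have : a⁻¹ * h ≠ g := by
      intro hc
      apply ha
      rw [← hc]
      group
    simp [single, this])]
  have h2 : (h * g⁻¹)⁻¹ * h = g := by group
  rw [h2]
  simp [single]

lemma lt_mul_right (h1 : ∀ a b c : G, a ≤ b → a * c ≤ b * c)
    {a b : G} (hab : a < b) (c : G) : a * c < b * c :=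
  lt_of_le_of_ne (h1 _ _ _ hab.le) (fun e => hab.ne (mul_right_cancel e))

lemma lt_mul_left (h2 : ∀ a b c : G, a ≤ b → c * a ≤ c * b)
    {a b : G} (hab : a < b) (c : G) : c * a < c * b :=
  lt_of_le_of_ne (h2 _ _ _ hab.le) (fun e => hab.ne (mul_left_cancel e))

lemma finsum_nat_shift (f : ℕ → R) (hf : (support f).Finite) :
    ∑ᶠ n, f n = f 0 + ∑ᶠ n, f (n + 1) := by
  classical
  set K : Finset ℕ := hf.toFinset with hK
  have h0 : ∑ᶠ n, f n = ∑ n ∈ insert 0 K, f n :=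
    finsum_eq_sum_of_support_subset _ (by
      intro n hn
      simp only [Finset.coe_insert, Set.mem_insert_iff]
      exact Or.inr (by simpa [hK] using hn))
  set E : Finset ℕ := (insert 0 K).erase 0 with hE
  have h1 : ∑ n ∈ insert 0 K, f n = f 0 + ∑ n ∈ E, f n :=
    (Finset.add_sum_erase _ f (Finset.mem_insert_self 0 K)).symm
  have h2 : ∑ m ∈ E.image (· - 1), f (m + 1) = ∑ n ∈ E, f n := by
    rw [Finset.sum_image (fun m hm m' hm' hmm => by
      have hm0 : m ≠ 0 := Finset.ne_of_mem_erase hm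
      have hm0' : m' ≠ 0 := Finset.ne_of_mem_erase hm'
      omega)]
    refine Finset.sum_congr rfl fun n hn => ?_
    have hn0 : n ≠ 0 := Finset.ne_of_mem_erase hn
    congr 1
    omega
  have h3 : ∑ᶠ m, f (m + 1) = ∑ m ∈ E.image (· - 1), f (m + 1) := by
    refine finsum_eq_sum_of_support_subset _ (fun m hm => ?_)
    have : m + 1 ∈ E := by
      refine Finset.mem_erase.mpr ⟨by omega, Finset.mem_insert_of_mem ?_⟩
      simpa [hK] using hm
    simpa using Finset.mem_image.mpr ⟨m + 1, this, by omega⟩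
  rw [h0, h1, h3, h2]
lemma prod_le_prod_forall₂ (h1 : ∀ a b c : G, a ≤ b → a * c ≤ b * c)
    (h2 : ∀ a b c : G, a ≤ b → c * a ≤ c * b)
    {l l' : List G} (h : List.Forall₂ (· ≤ ·) l l') : l.prod ≤ l'.prod := by
  induction h with
  | nil => simp
  | cons hab _ ih =>
    simp only [List.prod_cons]
    exact le_trans (h1 _ _ _ hab) (h2 _ _ _ ih)

lemma prod_le_prod_sublist (h1 : ∀ a b c : G, a ≤ b → a * c ≤ b * c)
    (h2 : ∀ a b c : G, a ≤ b → c * a ≤ c * b)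
    {l l' : List G} (h : List.Sublist l l') : (∀ u ∈ l', (1 : G) ≤ u) → l.prod ≤ l'.prod := by
  induction h with
  | slnil => intro _; exact le_refl _
  | @cons l₁ l₂ a h ih =>
    intro hpos
    have h3 := ih (fun u hu => hpos u (List.mem_cons_of_mem _ hu))
    calc l₁.prod ≤ l₂.prod := h3
      _ = 1 * l₂.prod := (one_mul _).symm
      _ ≤ a * l₂.prod := h1 _ _ _ (hpos a (List.mem_cons_self))
      _ = (a :: l₂).prod := (List.prod_cons).symm
  | @cons_cons l₁ l₂ a h ih =>
    intro hpos
    have h3 := ih (fun u hu => hpos u (List.mem_cons_of_mem _ hu))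
    simp only [List.prod_cons]
    exact h2 _ _ _ h3

lemma prod_lt_prod_sublist (h1 : ∀ a b c : G, a ≤ b → a * c ≤ b * c)
    (h2 : ∀ a b c : G, a ≤ b → c * a ≤ c * b)
    {l l' : List G} (h : List.Sublist l l') :
    (∀ u ∈ l', (1 : G) < u) → l.length < l'.length → l.prod < l'.prod := by
  induction h with
  | slnil => intro _ hlen; simp at hlen
  | @cons l₁ l₂ a h ih =>
    intro hpos _
    have h3 : l₁.prod ≤ l₂.prod :=
      prod_le_prod_sublist h1 h2 h (fun u hu => (hpos u (List.mem_cons_of_mem _ hu)).le)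
    have h4 : (1 : G) * l₂.prod < a * l₂.prod :=
      lt_mul_right h1 (hpos a (List.mem_cons_self)) _
    rw [one_mul] at h4
    calc l₁.prod ≤ l₂.prod := h3
      _ < a * l₂.prod := h4
      _ = (a :: l₂).prod := (List.prod_cons).symm
  | @cons_cons l₁ l₂ a h ih =>
    intro hpos hlen
    have h5 : l₁.length < l₂.length := by simpa using hlen
    have h3 := ih (fun u hu => hpos u (List.mem_cons_of_mem _ hu)) h5
    simp only [List.prod_cons]
    exact lt_mul_left h2 h3 a

lemma prod_le_of_sublistForall₂ (h1 : ∀ a b c : G, a ≤ b → a * c ≤ b * c)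
    (h2 : ∀ a b c : G, a ≤ b → c * a ≤ c * b)
    {l l' : List G} (h : List.SublistForall₂ (· ≤ ·) l l')
    (hpos : ∀ u ∈ l', (1 : G) ≤ u) : l.prod ≤ l'.prod := by
  obtain ⟨m, hf, hs⟩ := List.sublistForall₂_iff.mp h
  exact le_trans (prod_le_prod_forall₂ h1 h2 hf)
    (prod_le_prod_sublist h1 h2 hs hpos)

lemma prod_lt_of_sublistForall₂ (h1 : ∀ a b c : G, a ≤ b → a * c ≤ b * c)
    (h2 : ∀ a b c : G, a ≤ b → c * a ≤ c * b)
    {l l' : List G} (h : List.SublistForall₂ (· ≤ ·) l l')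
    (hpos : ∀ u ∈ l', (1 : G) < u) (hlen : l.length < l'.length) : l.prod < l'.prod := by
  obtain ⟨m, hf, hs⟩ := List.sublistForall₂_iff.mp h
  have hlm : l.length = m.length := hf.length_eq
  refine lt_of_le_of_lt (prod_le_prod_forall₂ h1 h2 hf) ?_
  exact prod_lt_prod_sublist h1 h2 hs hpos (by omega)

lemma higman {T : Set G} (hT : T.IsWF) :
    {l : List G | ∀ u ∈ l, u ∈ T}.PartiallyWellOrderedOn
      (List.SublistForall₂ (· ≤ ·)) := by
  have := Set.PartiallyWellOrderedOn.partiallyWellOrderedOn_sublistForall₂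
    (α := G) (· ≤ ·) (s := T) (Set.isPWO_iff_isWF.mpr hT)
  convert this using 1

lemma isWF_prods (h1 : ∀ a b c : G, a ≤ b → a * c ≤ b * c)
    (h2 : ∀ a b c : G, a ≤ b → c * a ≤ c * b)
    {T : Set G} (hT : T.IsWF) (hT1 : ∀ t ∈ T, (1 : G) < t) :
    ((fun l : List G => l.prod) '' {l | ∀ u ∈ l, u ∈ T}).IsWF := by
  rw [← Set.isPWO_iff_isWF, Set.IsPWO, Set.partiallyWellOrderedOn_iff_exists_lt]
  intro f hf
  have hf' : ∀ n, ∃ l : List G, (∀ u ∈ l, u ∈ T) ∧ l.prod = f n := by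
    intro n
    obtain ⟨l, hl, hlp⟩ := hf n
    exact ⟨l, hl, hlp⟩
  choose l hl hlp using hf'
  obtain ⟨m, n, hmn, hsub⟩ := (higman hT).exists_lt hl
  refine ⟨m, n, hmn, ?_⟩
  rw [← hlp m, ← hlp n]
  exact prod_le_of_sublistForall₂ h1 h2 hsub (fun u hu => (hT1 u (hl n u hu)).le)

lemma finite_exponents (h1 : ∀ a b c : G, a ≤ b → a * c ≤ b * c)
    (h2 : ∀ a b c : G, a ≤ b → c * a ≤ c * b)
    {T : Set G} (hT : T.IsWF) (hT1 : ∀ t ∈ T, (1 : G) < t) (g : G) :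
    {n : ℕ | ∃ l : List G, (∀ u ∈ l, u ∈ T) ∧ l.length = n ∧ l.prod = g}.Finite := by
  by_contra h
  have hio : {n : ℕ | ∃ l : List G,
      (∀ u ∈ l, u ∈ T) ∧ l.length = n ∧ l.prod = g}.Infinite := h
  obtain f := hio.natEmbedding
  have hf' : ∀ k, ∃ l : List G, (∀ u ∈ l, u ∈ T) ∧ l.length = (f k : ℕ) ∧ l.prod = g :=
    fun k => (f k).2
  choose l hl hlen hlp using hf'
  obtain ⟨m, n, hmn, hsub⟩ := (higman hT).exists_lt hl
  have hlenle : (l m).length ≤ (l n).length := by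
    obtain ⟨w, hf2, hs⟩ := List.sublistForall₂_iff.mp hsub
    calc (l m).length = w.length := hf2.length_eq
      _ ≤ (l n).length := hs.length_le
  have hlen_ne : (l m).length ≠ (l n).length := by
    rw [hlen m, hlen n]
    intro e
    exact hmn.ne (f.injective (Subtype.ext e))
  have hstrict := prod_lt_of_sublistForall₂ h1 h2 hsub
    (fun u hu => hT1 u (hl n u hu)) (lt_of_le_of_ne hlenle hlen_ne)
  rw [hlp m, hlp n] at hstrict
  exact lt_irrefl g hstrict
def ypow (ν : G → R ≃+* R) (μ : G → G → Rˣ) (y : G → R) : ℕ → (G → R)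
  | 0 => oneMN
  | n + 1 => mulMN ν μ y (ypow ν μ y n)

lemma support_ypow {y : G → R} : ∀ n, support (ypow ν μ y n) ⊆
    {g | ∃ l : List G, (∀ u ∈ l, u ∈ support y) ∧ l.length = n ∧ l.prod = g} := by
  intro n
  induction n with
  | zero =>
    intro g hg
    have hg1 : g = 1 := by
      by_contra hne
      exact hg (if_neg hne)
    exact ⟨[], by simp, rfl, by simp [hg1]⟩
  | succ n ih =>
    intro g hg
    obtain ⟨⟨a, b⟩, ⟨ha, hb⟩, hab⟩ := support_mul y (ypow ν μ y n) hg
    obtain ⟨l, hl, hlen, hlp⟩ := ih hb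
    refine ⟨a :: l, ?_, by simp [hlen], by simp only at hab; simp [List.prod_cons, hlp, hab]⟩
    intro u hu
    rcases List.mem_cons.mp hu with rfl | hu
    · exact ha
    · exact hl u hu

lemma ypow_mem (h1 : ∀ a b c : G, a ≤ b → a * c ≤ b * c)
    (h2 : ∀ a b c : G, a ≤ b → c * a ≤ c * b)
    {y : G → R} (hy : y ∈ MNset R G) : ∀ n, ypow ν μ y n ∈ MNset R G := by
  intro n
  induction n with
  | zero => exact oneMN_mem
  | succ n ih => exact mul_mem h1 h2 hy ih

lemma finN (h1 : ∀ a b c : G, a ≤ b → a * c ≤ b * c)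
    (h2 : ∀ a b c : G, a ≤ b → c * a ≤ c * b)
    {y : G → R} (hy : y ∈ MNset R G) (hy1 : ∀ g ∈ support y, (1 : G) < g) (h : G) :
    {n : ℕ | ypow ν μ y n h ≠ 0}.Finite := by
  refine (finite_exponents h1 h2 (hy : (support y).IsWF) hy1 h).subset ?_
  intro n hn
  exact support_ypow n hn

lemma U_isWF (h1 : ∀ a b c : G, a ≤ b → a * c ≤ b * c)
    (h2 : ∀ a b c : G, a ≤ b → c * a ≤ c * b)
    {y : G → R} (hy : y ∈ MNset R G) (hy1 : ∀ g ∈ support y, (1 : G) < g) :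
    (⋃ n, support (ypow ν μ y n)).IsWF := by
  refine (isWF_prods h1 h2 (hy : (support y).IsWF) hy1).mono ?_
  refine Set.iUnion_subset fun n => subset_trans (support_ypow n) ?_
  rintro g ⟨l, hl, -, hlp⟩
  exact ⟨l, hl, hlp⟩

lemma geom_supp {y : G → R} (h : G) (hh : (∑ᶠ n, ypow ν μ y n h) ≠ 0) :
    h ∈ ⋃ n, support (ypow ν μ y n) := by
  by_contra hc
  apply hh
  refine finsum_eq_zero_of_forall_eq_zero fun n => ?_
  by_contra hz
  exact hc (Set.mem_iUnion.mpr ⟨n, hz⟩)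

lemma geom_mem (h1 : ∀ a b c : G, a ≤ b → a * c ≤ b * c)
    (h2 : ∀ a b c : G, a ≤ b → c * a ≤ c * b)
    {y : G → R} (hy : y ∈ MNset R G) (hy1 : ∀ g ∈ support y, (1 : G) < g) :
    (fun g => ∑ᶠ n, ypow ν μ y n g) ∈ MNset R G :=
  mem_MNset.mpr ((U_isWF h1 h2 hy hy1).mono (fun g hg => geom_supp g hg))

lemma ypow_succ_right (h1 : ∀ a b c : G, a ≤ b → a * c ≤ b * c)
    (h2 : ∀ a b c : G, a ≤ b → c * a ≤ c * b)
    (hν : ∀ g g' : G, ∀ r : R,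
      ν g (ν g' r) = (μ g g' : R) * ν (g * g') r * ((μ g g')⁻¹ : Rˣ))
    (hμ : ∀ g g' g'' : G,
      (μ g g' : R) * (μ (g * g') g'' : R) = ν g (μ g' g'') * (μ g (g' * g'') : R))
    (hν1 : ν 1 = RingEquiv.refl R) (hμ1 : ∀ g : G, μ 1 g = 1 ∧ μ g 1 = 1)
    {y : G → R} (hy : y ∈ MNset R G) :
    ∀ n, mulMN ν μ (ypow ν μ y n) y = ypow ν μ y (n + 1) := by
  intro n
  induction n with
  | zero =>
    show mulMN ν μ oneMN y = mulMN ν μ y oneMN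
    rw [one_mul' hν1 hμ1, mul_one' hμ1]
  | succ n ih =>
    show mulMN ν μ (mulMN ν μ y (ypow ν μ y n)) y = _
    rw [mul_assoc' h1 h2 hν hμ hy (ypow_mem h1 h2 hy n) hy, ih]
    rfl

lemma geom_spec (h1 : ∀ a b c : G, a ≤ b → a * c ≤ b * c)
    (h2 : ∀ a b c : G, a ≤ b → c * a ≤ c * b)
    {y : G → R} (hy : y ∈ MNset R G) (hy1 : ∀ g ∈ support y, (1 : G) < g) :
    mulMN ν μ y (fun g => ∑ᶠ n, ypow ν μ y n g)
      = (fun g => ∑ᶠ n, ypow ν μ y n g) - oneMN := by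
  have hU := U_isWF (ν := ν) (μ := μ) h1 h2 hy hy1
  have hfin := finN (ν := ν) (μ := μ) h1 h2 hy hy1
  funext g
  have hA := finite_antidiag h1 h2 (hy : (support y).IsWF) hU g
  set A : Finset (G × G) := hA.toFinset with hAdef
  have hAmem : ∀ p : G × G, p ∈ A ↔ (p.1 ∈ support y ∧
      p.2 ∈ (⋃ n, support (ypow ν μ y n)) ∧ p.1 * p.2 = g) := fun p => hA.mem_toFinset
  have hA' : ∀ p ∈ A, p.1 * p.2 = g := fun p hp => ((hAmem p).mp hp).2.2
  set N : Finset ℕ := A.biUnion (fun p => (hfin p.2).toFinset) with hNdef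
  have hNmem : ∀ p : G × G, p ∈ A → ∀ n : ℕ, ypow ν μ y n p.2 ≠ 0 → n ∈ N :=
    fun p hp n hn => Finset.mem_biUnion.mpr ⟨p, hp, (hfin p.2).mem_toFinset.mpr hn⟩
  have e1 : mulMN ν μ y (fun g => ∑ᶠ n, ypow ν μ y n g) g
      = ∑ p ∈ A, y p.1 * ν p.1 (∑ᶠ n, ypow ν μ y n p.2) * (μ p.1 p.2 : R) :=
    mul_eq_sum (fun p hyp hwp hpg =>
      (hAmem p).mpr ⟨hyp, geom_supp p.2 hwp, hpg⟩) hA'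
  have e3 : ∀ n : ℕ, mulMN ν μ y (ypow ν μ y n) g
      = ∑ p ∈ A, y p.1 * ν p.1 (ypow ν μ y n p.2) * (μ p.1 p.2 : R) := fun n =>
    mul_eq_sum (fun p hyp hpn hpg =>
      (hAmem p).mpr ⟨hyp, Set.mem_iUnion.mpr ⟨n, hpn⟩, hpg⟩) hA'
  have e4 : mulMN ν μ y (fun g => ∑ᶠ n, ypow ν μ y n g) g
      = ∑ n ∈ N, ypow ν μ y (n + 1) g := by
    rw [e1]
    calc ∑ p ∈ A, y p.1 * ν p.1 (∑ᶠ n, ypow ν μ y n p.2) * (μ p.1 p.2 : R)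
        = ∑ p ∈ A, ∑ n ∈ N, y p.1 * ν p.1 (ypow ν μ y n p.2) * (μ p.1 p.2 : R) := by
          refine Finset.sum_congr rfl fun p hp => ?_
          rw [finsum_eq_sum_of_support_subset _ (fun n hn => hNmem p hp n hn),
            map_sum, Finset.mul_sum, Finset.sum_mul]
      _ = ∑ n ∈ N, ∑ p ∈ A, y p.1 * ν p.1 (ypow ν μ y n p.2) * (μ p.1 p.2 : R) :=
          Finset.sum_comm
      _ = ∑ n ∈ N, ypow ν μ y (n + 1) g := by
          refine Finset.sum_congr rfl fun n _ => ?_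
          rw [← e3 n]
          rfl
  have e5 : ∑ n ∈ N, ypow ν μ y (n + 1) g = ∑ᶠ n, ypow ν μ y (n + 1) g := by
    refine (finsum_eq_sum_of_support_subset _ (fun n hn => ?_)).symm
    have h6 : mulMN ν μ y (ypow ν μ y n) g ≠ 0 := hn
    rw [e3 n] at h6
    obtain ⟨p, hp, hterm⟩ := Finset.exists_ne_zero_of_sum_ne_zero h6
    have h7 : ypow ν μ y n p.2 ≠ 0 := by
      intro hz
      apply hterm
      simp [hz]
    exact hNmem p hp n h7
  have e6 : (∑ᶠ n, ypow ν μ y n g) = ypow ν μ y 0 g + ∑ᶠ n, ypow ν μ y (n + 1) g :=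
    finsum_nat_shift _ (hfin g)
  rw [Pi.sub_apply, e4, e5]
  have e7 : oneMN g = ypow ν μ y 0 g := rfl
  rw [e7, e6]
  rw [add_sub_cancel_left]

lemma geom_spec' (h1 : ∀ a b c : G, a ≤ b → a * c ≤ b * c)
    (h2 : ∀ a b c : G, a ≤ b → c * a ≤ c * b)
    (hν : ∀ g g' : G, ∀ r : R,
      ν g (ν g' r) = (μ g g' : R) * ν (g * g') r * ((μ g g')⁻¹ : Rˣ))
    (hμ : ∀ g g' g'' : G,
      (μ g g' : R) * (μ (g * g') g'' : R) = ν g (μ g' g'') * (μ g (g' * g'') : R))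
    (hν1 : ν 1 = RingEquiv.refl R) (hμ1 : ∀ g : G, μ 1 g = 1 ∧ μ g 1 = 1)
    {y : G → R} (hy : y ∈ MNset R G) (hy1 : ∀ g ∈ support y, (1 : G) < g) :
    mulMN ν μ (fun g => ∑ᶠ n, ypow ν μ y n g) y
      = (fun g => ∑ᶠ n, ypow ν μ y n g) - oneMN := by
  have hU := U_isWF (ν := ν) (μ := μ) h1 h2 hy hy1
  have hfin := finN (ν := ν) (μ := μ) h1 h2 hy hy1
  funext g
  have hA := finite_antidiag h1 h2 hU (hy : (support y).IsWF) g
  set A : Finset (G × G) := hA.toFinset with hAdef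
  have hAmem : ∀ p : G × G, p ∈ A ↔ (p.1 ∈ (⋃ n, support (ypow ν μ y n)) ∧
      p.2 ∈ support y ∧ p.1 * p.2 = g) := fun p => hA.mem_toFinset
  have hA' : ∀ p ∈ A, p.1 * p.2 = g := fun p hp => ((hAmem p).mp hp).2.2
  set N : Finset ℕ := A.biUnion (fun p => (hfin p.1).toFinset) with hNdef
  have hNmem : ∀ p : G × G, p ∈ A → ∀ n : ℕ, ypow ν μ y n p.1 ≠ 0 → n ∈ N :=
    fun p hp n hn => Finset.mem_biUnion.mpr ⟨p, hp, (hfin p.1).mem_toFinset.mpr hn⟩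
  have e1 : mulMN ν μ (fun g => ∑ᶠ n, ypow ν μ y n g) y g
      = ∑ p ∈ A, (∑ᶠ n, ypow ν μ y n p.1) * ν p.1 (y p.2) * (μ p.1 p.2 : R) :=
    mul_eq_sum (fun p hwp hyp hpg =>
      (hAmem p).mpr ⟨geom_supp p.1 hwp, hyp, hpg⟩) hA'
  have e3 : ∀ n : ℕ, mulMN ν μ (ypow ν μ y n) y g
      = ∑ p ∈ A, ypow ν μ y n p.1 * ν p.1 (y p.2) * (μ p.1 p.2 : R) := fun n =>
    mul_eq_sum (fun p hpn hyp hpg =>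
      (hAmem p).mpr ⟨Set.mem_iUnion.mpr ⟨n, hpn⟩, hyp, hpg⟩) hA'
  have e4 : mulMN ν μ (fun g => ∑ᶠ n, ypow ν μ y n g) y g
      = ∑ n ∈ N, ypow ν μ y (n + 1) g := by
    rw [e1]
    calc ∑ p ∈ A, (∑ᶠ n, ypow ν μ y n p.1) * ν p.1 (y p.2) * (μ p.1 p.2 : R)
        = ∑ p ∈ A, ∑ n ∈ N, ypow ν μ y n p.1 * ν p.1 (y p.2) * (μ p.1 p.2 : R) := by
          refine Finset.sum_congr rfl fun p hp => ?_
          rw [finsum_eq_sum_of_support_subset _ (fun n hn => hNmem p hp n hn),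
            Finset.sum_mul, Finset.sum_mul]
      _ = ∑ n ∈ N, ∑ p ∈ A, ypow ν μ y n p.1 * ν p.1 (y p.2) * (μ p.1 p.2 : R) :=
          Finset.sum_comm
      _ = ∑ n ∈ N, ypow ν μ y (n + 1) g := by
          refine Finset.sum_congr rfl fun n _ => ?_
          rw [← e3 n, ypow_succ_right h1 h2 hν hμ hν1 hμ1 hy n]
  have e5 : ∑ n ∈ N, ypow ν μ y (n + 1) g = ∑ᶠ n, ypow ν μ y (n + 1) g := by
    refine (finsum_eq_sum_of_support_subset _ (fun n hn => ?_)).symm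
    have h6 : mulMN ν μ (ypow ν μ y n) y g ≠ 0 := by
      rw [ypow_succ_right h1 h2 hν hμ hν1 hμ1 hy n]
      exact hn
    rw [e3 n] at h6
    obtain ⟨p, hp, hterm⟩ := Finset.exists_ne_zero_of_sum_ne_zero h6
    have h7 : ypow ν μ y n p.1 ≠ 0 := by
      intro hz
      apply hterm
      simp [hz]
    exact hNmem p hp n h7
  have e6 : (∑ᶠ n, ypow ν μ y n g) = ypow ν μ y 0 g + ∑ᶠ n, ypow ν μ y (n + 1) g :=
    finsum_nat_shift _ (hfin g)
  rw [Pi.sub_apply, e4, e5]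
  have e7 : oneMN g = ypow ν μ y 0 g := rfl
  rw [e7, e6]
  rw [add_sub_cancel_left]

lemma inv_one_sub (h1 : ∀ a b c : G, a ≤ b → a * c ≤ b * c)
    (h2 : ∀ a b c : G, a ≤ b → c * a ≤ c * b)
    (hν : ∀ g g' : G, ∀ r : R,
      ν g (ν g' r) = (μ g g' : R) * ν (g * g') r * ((μ g g')⁻¹ : Rˣ))
    (hμ : ∀ g g' g'' : G,
      (μ g g' : R) * (μ (g * g') g'' : R) = ν g (μ g' g'') * (μ g (g' * g'') : R))
    (hν1 : ν 1 = RingEquiv.refl R) (hμ1 : ∀ g : G, μ 1 g = 1 ∧ μ g 1 = 1)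
    {y : G → R} (hy : y ∈ MNset R G) (hy1 : ∀ g ∈ support y, (1 : G) < g) :
    ∃ v ∈ MNset R G, mulMN ν μ v (oneMN - y) = oneMN ∧
      mulMN ν μ (oneMN - y) v = oneMN := by
  have hvmem := geom_mem (ν := ν) (μ := μ) h1 h2 hy hy1
  refine ⟨_, hvmem, ?_, ?_⟩
  · have hsub : oneMN (R := R) (G := G) - y = oneMN + (-y) := sub_eq_add_neg _ _
    rw [hsub, left_distrib' h1 h2 hvmem oneMN_mem (neg_mem hy), mul_one' hμ1,
      mul_neg', geom_spec' h1 h2 hν hμ hν1 hμ1 hy hy1]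
    abel
  · have hsub : oneMN (R := R) (G := G) - y = oneMN + (-y) := sub_eq_add_neg _ _
    rw [hsub, right_distrib' h1 h2 oneMN_mem (neg_mem hy) hvmem, one_mul' hν1 hμ1,
      neg_mul', geom_spec h1 h2 hy hy1]
    abel
lemma exists_inv (h1 : ∀ a b c : G, a ≤ b → a * c ≤ b * c)
    (h2 : ∀ a b c : G, a ≤ b → c * a ≤ c * b)
    (hν : ∀ g g' : G, ∀ r : R,
      ν g (ν g' r) = (μ g g' : R) * ν (g * g') r * ((μ g g')⁻¹ : Rˣ))
    (hμ : ∀ g g' g'' : G,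
      (μ g g' : R) * (μ (g * g') g'' : R) = ν g (μ g' g'') * (μ g (g' * g'') : R))
    (hν1 : ν 1 = RingEquiv.refl R) (hμ1 : ∀ g : G, μ 1 g = 1 ∧ μ g 1 = 1)
    {x : G → R} (hx : x ∈ MNset R G) (hx0 : x ≠ 0) :
    ∃ v ∈ MNset R G, mulMN ν μ x v = oneMN ∧ mulMN ν μ v x = oneMN := by
  have hxW : (support x).IsWF := hx
  have hne : (support x).Nonempty := by
    obtain ⟨g, hg⟩ := Function.ne_iff.mp hx0
    exact ⟨g, hg⟩
  set g₀ := hxW.min hne with hg₀def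
  have hg₀mem : x g₀ ≠ 0 := hxW.min_mem hne
  have hmin : ∀ a, x a ≠ 0 → g₀ ≤ a := fun a ha => hxW.min_le hne ha
  have hνne : ∀ (q : G) (r : R), r ≠ 0 → ν q r ≠ 0 := by
    intro q r hr h
    exact hr ((ν q).injective (h.trans (map_zero (ν q)).symm))
  -- LEFT inverse
  have hcne : ν g₀⁻¹ (x g₀) * ((μ g₀⁻¹ g₀ : Rˣ) : R) ≠ 0 :=
    mul_ne_zero (hνne _ _ hg₀mem) (Units.ne_zero _)
  set c : R := (ν g₀⁻¹ (x g₀) * ((μ g₀⁻¹ g₀ : Rˣ) : R))⁻¹ with hcdef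
  set w : G → R := mulMN ν μ (single g₀⁻¹ c) x with hwdef
  have hwfun : w = fun h => c * ν g₀⁻¹ (x (g₀ * h)) * (μ g₀⁻¹ (g₀ * h) : R) := by
    rw [hwdef, single_mul]
    simp only [inv_inv]
  have hw1 : w 1 = 1 := by
    rw [hwfun]
    simp only [mul_one]
    rw [mul_assoc, hcdef]
    exact inv_mul_cancel₀ hcne
  have hwmem : w ∈ MNset R G := by
    rw [hwdef]
    exact mul_mem h1 h2 (single_mem _ _) hx
  have hwsupp : ∀ h : G, w h ≠ 0 → h ≠ 1 → 1 < h := by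
    intro h hh hne1
    have hxh : x (g₀ * h) ≠ 0 := by
      intro hz
      apply hh
      rw [hwfun]
      simp [hz]
    have hle : g₀ ≤ g₀ * h := hmin _ hxh
    by_contra hnlt
    have hlt : h < 1 := lt_of_le_of_ne (not_lt.mp hnlt) hne1
    have h9 := lt_mul_left h2 hlt g₀
    rw [mul_one] at h9
    exact absurd hle (not_le.mpr h9)
  set y : G → R := oneMN - w with hydef
  have hymem : y ∈ MNset R G := by
    rw [hydef, sub_eq_add_neg]
    exact add_mem oneMN_mem (neg_mem hwmem)
  have hy1 : ∀ h ∈ support y, (1 : G) < h := by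
    intro h hh
    have hh' : y h ≠ 0 := hh
    by_cases he : h = 1
    · exfalso
      apply hh'
      rw [hydef, he, Pi.sub_apply, hw1]
      simp [oneMN]
    · refine hwsupp h ?_ he
      intro hz
      apply hh'
      rw [hydef, Pi.sub_apply, hz]
      simp [oneMN, he]
  obtain ⟨v, hvmem, hv1, hv2⟩ := inv_one_sub h1 h2 hν hμ hν1 hμ1 hymem hy1
  have hyw : oneMN (R := R) (G := G) - y = w := by rw [hydef, sub_sub_cancel]
  rw [hyw] at hv1 hv2
  set L : G → R := mulMN ν μ v (single g₀⁻¹ c) with hLdef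
  have hLmem : L ∈ MNset R G := by
    rw [hLdef]
    exact mul_mem h1 h2 hvmem (single_mem _ _)
  have hLx : mulMN ν μ L x = oneMN := by
    rw [hLdef, mul_assoc' h1 h2 hν hμ hvmem (single_mem _ _) hx, ← hwdef, hv1]
  -- RIGHT inverse
  set c' : R := (ν g₀).symm ((x g₀)⁻¹ * (((μ g₀ g₀⁻¹)⁻¹ : Rˣ) : R)) with hc'def
  set w' : G → R := mulMN ν μ x (single g₀⁻¹ c') with hw'def
  have hw'fun : w' = fun h => x (h * g₀) * ν (h * g₀) c' * (μ (h * g₀) g₀⁻¹ : R) := by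
    rw [hw'def, mul_single]
    simp only [inv_inv]
  have hw'1 : w' 1 = 1 := by
    rw [hw'fun]
    simp only [one_mul]
    rw [hc'def, RingEquiv.apply_symm_apply, ← mul_assoc, mul_inv_cancel₀ hg₀mem,
      one_mul, Units.inv_mul]
  have hw'mem : w' ∈ MNset R G := by
    rw [hw'def]
    exact mul_mem h1 h2 hx (single_mem _ _)
  have hw'supp : ∀ h : G, w' h ≠ 0 → h ≠ 1 → 1 < h := by
    intro h hh hne1
    have hxh : x (h * g₀) ≠ 0 := by
      intro hz
      apply hh
      rw [hw'fun]
      simp [hz]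
    have hle : g₀ ≤ h * g₀ := hmin _ hxh
    by_contra hnlt
    have hlt : h < 1 := lt_of_le_of_ne (not_lt.mp hnlt) hne1
    have h9 := lt_mul_right h1 hlt g₀
    rw [one_mul] at h9
    exact absurd hle (not_le.mpr h9)
  set y' : G → R := oneMN - w' with hy'def
  have hy'mem : y' ∈ MNset R G := by
    rw [hy'def, sub_eq_add_neg]
    exact add_mem oneMN_mem (neg_mem hw'mem)
  have hy'1 : ∀ h ∈ support y', (1 : G) < h := by
    intro h hh
    have hh' : y' h ≠ 0 := hh
    by_cases he : h = 1
    · exfalso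
      apply hh'
      rw [hy'def, he, Pi.sub_apply, hw'1]
      simp [oneMN]
    · refine hw'supp h ?_ he
      intro hz
      apply hh'
      rw [hy'def, Pi.sub_apply, hz]
      simp [oneMN, he]
  obtain ⟨v', hv'mem, hv'1, hv'2⟩ := inv_one_sub h1 h2 hν hμ hν1 hμ1 hy'mem hy'1
  have hy'w : oneMN (R := R) (G := G) - y' = w' := by rw [hy'def, sub_sub_cancel]
  rw [hy'w] at hv'1 hv'2
  set Rt : G → R := mulMN ν μ (single g₀⁻¹ c') v' with hRdef
  have hRmem : Rt ∈ MNset R G := by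
    rw [hRdef]
    exact mul_mem h1 h2 (single_mem _ _) hv'mem
  have hxR : mulMN ν μ x Rt = oneMN := by
    rw [hRdef, ← mul_assoc' h1 h2 hν hμ hx (single_mem _ _) hv'mem, ← hw'def, hv'2]
  have hLR : L = Rt := by
    calc L = mulMN ν μ L oneMN := (mul_one' hμ1 L).symm
      _ = mulMN ν μ L (mulMN ν μ x Rt) := by rw [hxR]
      _ = mulMN ν μ (mulMN ν μ L x) Rt := (mul_assoc' h1 h2 hν hμ hLmem hx hRmem).symm
      _ = mulMN ν μ oneMN Rt := by rw [hLx]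
      _ = Rt := one_mul' hν1 hμ1 Rt
  exact ⟨L, hLmem, by rw [hLR]; exact hxR, hLx⟩

end MN


/-- **Malcev–Neumann.** Let `G` be a group with a biordering `≤` and let `RG`
be a twisted group ring over a skew-field `R`.  Then the set `F_≤(RG)` of functions
`x : G → R` with `≤`-well-ordered support, equipped with the twisted convolution, is a ring
containing `RG` (closed under addition, negation and multiplication, containing all
finitely supported functions, with associative unital multiplication distributing over
addition); moreover, since `R` is a skew-field, `F_≤(RG)` is a skew-field: every nonzero
element has a two-sided inverse in `F_≤(RG)`. -/
theorem stmt_9 {R G : Type*} [DivisionRing R] [Group G] [LinearOrder G]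
    (hbo₁ : ∀ a b c : G, a ≤ b → a * c ≤ b * c)
    (hbo₂ : ∀ a b c : G, a ≤ b → c * a ≤ c * b)
    (ν : G → R ≃+* R) (μ : G → G → Rˣ)
    (hν : ∀ g g' : G, ∀ r : R,
      ν g (ν g' r) = (μ g g' : R) * ν (g * g') r * ((μ g g')⁻¹ : Rˣ))
    (hμ : ∀ g g' g'' : G,
      (μ g g' : R) * (μ (g * g') g'' : R) = ν g (μ g' g'') * (μ g (g' * g'') : R))
    (hν1 : ν 1 = RingEquiv.refl R) (hμ1 : ∀ g : G, μ 1 g = 1 ∧ μ g 1 = 1) :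
    (∀ x ∈ MNset R G, ∀ y ∈ MNset R G, x + y ∈ MNset R G) ∧
    (∀ x ∈ MNset R G, -x ∈ MNset R G) ∧
    ((0 : G → R) ∈ MNset R G ∧ oneMN (R := R) (G := G) ∈ MNset R G) ∧
    (∀ x : G → R, {g : G | x g ≠ 0}.Finite → x ∈ MNset R G) ∧
    (∀ x ∈ MNset R G, ∀ y ∈ MNset R G, mulMN ν μ x y ∈ MNset R G) ∧
    (∀ x ∈ MNset R G, mulMN ν μ oneMN x = x ∧ mulMN ν μ x oneMN = x) ∧
    (∀ x ∈ MNset R G, ∀ y ∈ MNset R G, ∀ z ∈ MNset R G,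
      mulMN ν μ (mulMN ν μ x y) z = mulMN ν μ x (mulMN ν μ y z)) ∧
    (∀ x ∈ MNset R G, ∀ y ∈ MNset R G, ∀ z ∈ MNset R G,
      mulMN ν μ x (y + z) = mulMN ν μ x y + mulMN ν μ x z ∧
      mulMN ν μ (x + y) z = mulMN ν μ x z + mulMN ν μ y z) ∧
    (∀ x ∈ MNset R G, x ≠ 0 →
      ∃ y ∈ MNset R G, mulMN ν μ x y = oneMN ∧ mulMN ν μ y x = oneMN) := by
  refine ⟨fun x hx y hy => MN.add_mem hx hy,
    fun x hx => MN.neg_mem hx,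
    ⟨MN.zero_mem, MN.oneMN_mem⟩,
    fun x hfin => MN.finite_support_mem x hfin,
    fun x hx y hy => MN.mul_mem hbo₁ hbo₂ hx hy,
    fun x hx => ⟨MN.one_mul' hν1 hμ1 x, MN.mul_one' hμ1 x⟩,
    fun x hx y hy z hz => MN.mul_assoc' hbo₁ hbo₂ hν hμ hx hy hz,
    fun x hx y hy z hz => ⟨MN.left_distrib' hbo₁ hbo₂ hx hy hz,
      MN.right_distrib' hbo₁ hbo₂ hx hy hz⟩,
    fun x hx hx0 => MN.exists_inv hbo₁ hbo₂ hν hμ hν1 hμ1 hx hx0⟩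
end
end

section
/- Let Q be a finite group, ψ a real character on a group H that is normal in G with G/H = Q, s : Q → G a section with s(1)=1, and equip D(H)Q with the induced twisted group ring structure. Define the Q-value qval_ψ(x) = min_{p,q∈Q} { ψ^p(x_q) + (1/|Q|)·ψ(s(q)^{|Q|}) } for x = Σ x_q q. Then for x, y ∈ D(H) and q ∈ Q: (a) qval_ψ(s(q)·x·s(q)⁻¹) = qval_ψ(x); (b) qval_ψ(x·q) = qval_ψ(q·x) = qval_ψ(q) + qval_ψ(x); (c) qval_ψ(xy) ≥ qval_ψ(x) + qval_ψ(y). -/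
noncomputable section

open scoped Classical

variable {G Q D : Type*} [Group G] [Group Q] [Fintype Q] [DivisionRing D]

/-- The weight `(1/|Q|) ψ (s q ^ |Q|)` appearing in the definition of the `Q`-value;
note `s q ^ |Q| ∈ H = ker π`. -/
def qwt (π : G →* Q) (s : Q → G) (hs : ∀ q, π (s q) = q)
    (ι : ↥π.ker →* Dˣ) (ψ : D → EReal) (q : Q) : EReal :=
  (((Fintype.card Q : ℝ)⁻¹ : ℝ) : EReal) *
    ψ (ι ⟨s q ^ Fintype.card Q, by
      rw [MonoidHom.mem_ker, map_pow, hs, pow_card_eq_one]⟩)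

/-- The `Q`-value `qval ψ x = min_{p,q} { ψ^p (x_q) + (1/|Q|) ψ (s q ^ |Q|) }` of an
element `x = Σ x_q q` of the twisted group ring `D(H) Q`, where `ψ^p = ψ ∘ c (s p)`. -/
def qval (π : G →* Q) (s : Q → G) (hs : ∀ q, π (s q) = q)
    (c : G →* D ≃+* D) (ι : ↥π.ker →* Dˣ) (ψ : D → EReal) (x : Q → D) : EReal :=
  ⨅ p : Q, ⨅ q : Q, (ψ (c (s p) (x q)) + qwt π s hs ι ψ q)

/-- The element of `D(H) Q` supported at `q ∈ Q` with coefficient `d ∈ D(H)`. -/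
def qdelta (Q : Type*) [Group Q] (q : Q) (d : D) : Q → D :=
  fun p => if p = q then d else 0

/-- With `Q` a finite quotient of `G` with kernel `H`, `s` a section with
`s 1 = 1`, `D = D(H)` the Linnell skew-field of `H` (carrying the conjugation action `c` of
`G` and the extension `ψ` of a real character of `H` to a homomorphism
`D ∖ {0} → ℝ` with `ψ 0 = ∞`), for all `x, y ∈ D(H)` and `q ∈ Q`:
(a) `qval ψ (s q · x · s q⁻¹) = qval ψ x`;
(b) `qval ψ (x · q) = qval ψ (q · x) = qval ψ q + qval ψ x`;
(c) `qval ψ (x y) ≥ qval ψ x + qval ψ y`. -/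
theorem stmt_13 (π : G →* Q) (hπ : Function.Surjective π) (s : Q → G)
    (hs : ∀ q, π (s q) = q) (hs1 : s 1 = 1)
    (c : G →* D ≃+* D) (ι : ↥π.ker →* Dˣ)
    (hcι : ∀ (g : G) (h : ↥π.ker),
      c g (ι h) = ι ⟨g * h * g⁻¹, Subgroup.Normal.conj_mem inferInstance _ h.2 g⟩)
    (hinner : ∀ (h : ↥π.ker) (x : D),
      c (h : G) x = (ι h : D) * x * ((ι h)⁻¹ : Dˣ))
    (ψ : D → EReal) (hψ0 : ψ 0 = ⊤)
    (hψreal : ∀ x : D, x ≠ 0 → ψ x ≠ ⊤ ∧ ψ x ≠ ⊥)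
    (hψmul : ∀ x y : D, x ≠ 0 → y ≠ 0 → ψ (x * y) = ψ x + ψ y)
    (hψadd : ∀ x y : D, min (ψ x) (ψ y) ≤ ψ (x + y))
    (x y : D) (q : Q) :
    (qval π s hs c ι ψ (qdelta Q 1 (c (s q) x)) =
        qval π s hs c ι ψ (qdelta Q 1 x)) ∧
    (qval π s hs c ι ψ (qdelta Q q x) =
        qval π s hs c ι ψ (qdelta Q q 1) + qval π s hs c ι ψ (qdelta Q 1 x) ∧
      qval π s hs c ι ψ (qdelta Q q (c (s q) x)) =
        qval π s hs c ι ψ (qdelta Q q 1) + qval π s hs c ι ψ (qdelta Q 1 x)) ∧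
    (qval π s hs c ι ψ (qdelta Q 1 x) + qval π s hs c ι ψ (qdelta Q 1 y) ≤
      qval π s hs c ι ψ (qdelta Q 1 (x * y))) := by
  classical
  haveI : Nonempty Q := ⟨1⟩
  -- ψ 1 = 0
  have hψ1 : ψ (1:D) = 0 := by
    obtain ⟨h1, h2⟩ := hψreal 1 one_ne_zero
    have hm := hψmul 1 1 one_ne_zero one_ne_zero
    rw [one_mul] at hm
    lift ψ (1:D) to ℝ using ⟨h1, h2⟩ with r hr
    have : r = r + r := by exact_mod_cast hm
    have hr0 : r = 0 := by linarith
    rw [hr0]; rfl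
  have hreal : ∀ d : D, d ≠ 0 → ∃ r : ℝ, ψ d = (r : EReal) := by
    intro d hd
    obtain ⟨h1, h2⟩ := hψreal d hd
    lift ψ d to ℝ using ⟨h1, h2⟩ with r hr
    exact ⟨r, rfl⟩
  -- the weights are real
  have hwreal : ∀ q0 : Q, ∃ r : ℝ, qwt π s hs ι ψ q0 = (r : EReal) := by
    intro q0
    obtain ⟨r, hr⟩ := hreal ((ι ⟨s q0 ^ Fintype.card Q, by
      rw [MonoidHom.mem_ker, map_pow, hs, pow_card_eq_one]⟩ : Dˣ) : D) (Units.ne_zero _)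
    refine ⟨(Fintype.card Q : ℝ)⁻¹ * r, ?_⟩
    unfold qwt
    rw [hr, ← EReal.coe_mul]
  have hw1 : qwt π s hs ι ψ 1 = 0 := by
    unfold qwt
    have he : (⟨s (1:Q) ^ Fintype.card Q, by
        rw [MonoidHom.mem_ker, map_pow, hs, pow_card_eq_one]⟩ : π.ker) = 1 := by
      ext; simp [hs1]
    rw [he, map_one, Units.val_one, hψ1, mul_zero]
  have hcmul : ∀ (g1 g2 : G) (d : D), c (g1 * g2) d = c g1 (c g2 d) := by
    intro g1 g2 d; rw [map_mul]; rfl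
  have hcne : ∀ (g : G) (d : D), d ≠ 0 → c g d ≠ 0 := by
    intro g d hd h0
    exact hd ((c g).injective (by rw [h0, map_zero]))
  -- pulling a constant out of a finite infimum
  have hpull : ∀ (a : Q → EReal) (b : EReal), (⨅ p, (a p + b)) = (⨅ p, a p) + b := by
    intro a b
    obtain ⟨p0, hp0⟩ := Finite.exists_min a
    have h1 : (⨅ p, a p) = a p0 := le_antisymm (iInf_le _ _) (le_iInf hp0)
    have h2 : (⨅ p, (a p + b)) = a p0 + b :=
      le_antisymm (iInf_le _ _) (le_iInf fun p => add_le_add (hp0 p) (le_refl b))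
    rw [h1, h2]
  -- value of a delta element
  have hA : ∀ (q0 : Q) (d : D), qval π s hs c ι ψ (qdelta Q q0 d)
      = (⨅ p : Q, ψ (c (s p) d)) + qwt π s hs ι ψ q0 := by
    intro q0 d
    unfold qval
    have hinner_eq : ∀ p : Q,
        (⨅ q' : Q, ψ (c (s p) (qdelta Q q0 d q')) + qwt π s hs ι ψ q')
          = ψ (c (s p) d) + qwt π s hs ι ψ q0 := by
      intro p
      apply le_antisymm
      · have h := iInf_le
          (fun q' : Q => ψ (c (s p) (qdelta Q q0 d q')) + qwt π s hs ι ψ q') q0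
        simpa [qdelta] using h
      · refine le_iInf fun q' => ?_
        by_cases h : q' = q0
        · subst h; simp [qdelta]
        · have h0 : qdelta Q q0 d q' = 0 := by simp [qdelta, h]
          rw [h0, map_zero, hψ0]
          obtain ⟨r, hr⟩ := hwreal q'
          rw [EReal.top_add_of_ne_bot (by rw [hr]; exact EReal.coe_ne_bot r)]
          exact le_top
    simp_rw [hinner_eq]
    exact hpull _ _
  -- twisted invariance of ψ under conjugation by sections
  have hE : ∀ (p q' : Q) (d : D), ψ (c (s p) (c (s q') d)) = ψ (c (s (p * q')) d) := by
    intro p q' d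
    have hmem : s p * s q' * (s (p * q'))⁻¹ ∈ π.ker := by
      rw [MonoidHom.mem_ker, map_mul, map_mul, map_inv, hs, hs, hs, mul_inv_cancel]
    have hcomp : c (s p) (c (s q') d)
        = c ((⟨s p * s q' * (s (p * q'))⁻¹, hmem⟩ : π.ker) : G) (c (s (p * q')) d) := by
      rw [← hcmul, ← hcmul]
      congr 1
      group
    rw [hcomp, hinner ⟨s p * s q' * (s (p * q'))⁻¹, hmem⟩]
    by_cases hd : d = 0
    · subst hd; simp
    · set u : Dˣ := ι (⟨s p * s q' * (s (p * q'))⁻¹, hmem⟩ : π.ker) with hu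
      set y : D := c (s (p * q')) d with hy
      have hyne : y ≠ 0 := hcne _ _ hd
      have hune : (u : D) ≠ 0 := Units.ne_zero u
      have huine : ((u⁻¹ : Dˣ) : D) ≠ 0 := Units.ne_zero _
      obtain ⟨a, ha⟩ := hreal _ hune
      obtain ⟨a', ha'⟩ := hreal _ huine
      obtain ⟨b, hb⟩ := hreal _ hyne
      have hsum : a + a' = 0 := by
        have hm := hψmul (u : D) ((u⁻¹ : Dˣ) : D) hune huine
        have h1 : ((u : D) * ((u⁻¹ : Dˣ) : D)) = 1 := by exact_mod_cast u.mul_inv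
        rw [h1, hψ1, ha, ha'] at hm
        exact_mod_cast hm.symm
      rw [hψmul _ _ (mul_ne_zero hune hyne) huine, hψmul _ _ hune hyne, ha, ha', hb]
      have hcast : ((a : EReal) + b) + a' = ((a + b + a' : ℝ) : EReal) := by
        push_cast; ring
      rw [hcast]
      exact_mod_cast by linarith
  have hreind : ∀ (q' : Q) (d : D),
      (⨅ p : Q, ψ (c (s p) (c (s q') d))) = ⨅ p : Q, ψ (c (s p) d) := by
    intro q' d
    simp_rw [hE]
    exact (Equiv.mulRight q').iInf_congr (fun p => rfl)
  have hconst : (⨅ p : Q, ψ (c (s p) (1:D))) = 0 := by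
    simp [map_one, hψ1]
  have hqAreal : ∀ d : D, d ≠ 0 → ∃ r : ℝ, (⨅ p : Q, ψ (c (s p) d)) = (r : EReal) := by
    intro d hd
    obtain ⟨p0, hp0⟩ := Finite.exists_min (fun p : Q => ψ (c (s p) d))
    obtain ⟨r, hr⟩ := hreal _ (hcne (s p0) d hd)
    exact ⟨r, by rw [le_antisymm (iInf_le _ p0) (le_iInf hp0), hr]⟩
  refine ⟨?_, ⟨?_, ?_⟩, ?_⟩
  · rw [hA, hA, hreind]
  · rw [hA, hA, hA, hconst, hw1, zero_add, add_zero, add_comm]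
  · rw [hA, hA, hA, hconst, hw1, zero_add, add_zero, hreind, add_comm]
  · rw [hA, hA, hA, hw1, add_zero, add_zero, add_zero]
    have h0 : (⨅ p : Q, ψ (c (s p) (0:D))) = ⊤ := by simp [hψ0]
    by_cases hx : x = 0
    · subst hx
      rw [zero_mul, h0]
      by_cases hy : y = 0
      · subst hy; rw [h0]; exact le_top
      · obtain ⟨r, hr⟩ := hqAreal y hy
        rw [hr, EReal.top_add_of_ne_bot (EReal.coe_ne_bot r)]
    · by_cases hy : y = 0
      · subst hy
        rw [mul_zero, h0]
        obtain ⟨r, hr⟩ := hqAreal x hx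
        rw [hr, EReal.add_top_of_ne_bot (EReal.coe_ne_bot r)]
      · refine le_iInf fun p => ?_
        rw [map_mul, hψmul _ _ (hcne _ _ hx) (hcne _ _ hy)]
        exact add_le_add (iInf_le _ p) (iInf_le _ p)
end
end

section
/- Suppose the chain 𝓛 is empty, so L_0 = H¹(G;ℝ) and L_i = H¹(H_i;ℝ) for i ≥ 0 with the natural inclusions L_i ⊆ L_j for i ≤ j. If U is a rich subset of H¹(H_n;ℝ), then the closure of U in H¹(H_n;ℝ) contains H¹(G;ℝ). -/
/-- `U` is open in the subspace `A` of `X`. -/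
def opIn {X : Type*} [TopologicalSpace X] (A U : Set X) : Prop :=
  ∃ O : Set X, IsOpen O ∧ U = O ∩ A

/-- The closure of `U` in the subspace `A` of `X`. -/
def clIn {X : Type*} [TopologicalSpace X] (A U : Set X) : Set X :=
  closure U ∩ A

/-- The interior of `U` in the subspace `A` of `X`. -/
def intIn {X : Type*} [TopologicalSpace X] (A U : Set X) : Set X :=
  A \ closure (A \ U)

/-- Richness of a subset of the `i`-th level `L i` of a chain of subspaces
`L 0 ⊆ L 1 ⊆ ⋯` of `X`, each level carrying a fixed dense set `Irr i` of "irrational"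
points.  A subset of the bottom level is rich iff it is very rich, i.e. open in `L 0` and
containing all irrational points of `L 0`; a subset `U` of `L (i+1)` is rich iff it is open
in `L (i+1)` and the interior of its closure (taken in `L (i+1)`) meets `L i` in a rich
subset of `L i`. -/
def Rich {X : Type*} [TopologicalSpace X] (L Irr : ℕ → Set X) : ℕ → Set X → Prop
  | 0, U => opIn (L 0) U ∧ Irr 0 ⊆ U
  | (i + 1), U => opIn (L (i + 1)) U ∧
      Rich L Irr i (intIn (L (i + 1)) (clIn (L (i + 1)) U) ∩ L i)

/-- Suppose the auxiliary chain `𝓛` is empty, so that the levels are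
`L 0 = H¹(G; ℝ) ⊆ L 1 ⊆ ⋯` with `L i = H¹(H_i; ℝ)` under the natural inclusions, each
carrying its dense set of irrational characters.  If `U` is a rich subset of
`L n = H¹(H_n; ℝ)`, then the closure of `U` contains `L 0 = H¹(G; ℝ)`. -/
theorem stmt_18 {X : Type*} [TopologicalSpace X] (L Irr : ℕ → Set X)
    (hmono : ∀ i, L i ⊆ L (i + 1)) (hIrr : ∀ i, Irr i ⊆ L i)
    (hdense : ∀ i, L i ⊆ closure (Irr i)) :
    ∀ (n : ℕ) (U : Set X), Rich L Irr n U → L 0 ⊆ closure U := by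
  intro n
  induction n with
  | zero =>
    intro U hU
    exact (hdense 0).trans (closure_mono hU.2)
  | succ n ih =>
    intro U hU
    refine (ih _ hU.2).trans (closure_minimal ?_ isClosed_closure)
    rintro x ⟨⟨hxL, hxnc⟩, -⟩
    by_contra hxc
    apply hxnc
    apply subset_closure
    simp only [clIn, Set.mem_diff, Set.mem_inter_iff]
    exact ⟨hxL, fun h => hxc h.1⟩
end
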